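/- arXiv:2503.00896 — 2 statements merged into one kernel-verified Lean document; each statement's English description precedes it below -/
import Mathlib

section
/- Let h(t) be the total size Σ_{λ ∈ DS(t)} |λ|, g(t) the total number of main diagonal hooks, and f(t) the number of partitions in DS(t). Then for t ≥ 3: h(t) = 2t·g(t−1) + (2t−2)·g(t−3) − h(t−1) − h(t−3) + f(t−3), with initial values h(0) = h(1) = 0 and h(2) = 1. -/
/-- An integer partition, given by its (weakly decreasing, eventually zero)
sequence of parts, indexed from `0`. -/
structure IntegerPartition where
  parts : ℕ → ℕ
  antitone : ∀ i j, i ≤ j → parts j ≤ parts i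
  finite : ∃ N, ∀ i, N ≤ i → parts i = 0

namespace IntegerPartition

/-- The size of a partition: the sum of its parts. -/
noncomputable def size (lam : IntegerPartition) : ℕ := ∑ᶠ i, lam.parts i

/-- The parts of the conjugate partition: `conjParts lam j` is the number of
rows `i` with `lam.parts i > j` (rows and columns are `0`-indexed). -/
noncomputable def conjParts (lam : IntegerPartition) (j : ℕ) : ℕ :=
  Nat.card {i : ℕ | j < lam.parts i}

/-- A partition is self-conjugate if it equals its conjugate. -/
def IsSelfConjugate (lam : IntegerPartition) : Prop :=
  ∀ j, lam.conjParts j = lam.parts j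

/-- `(i, j)` (both `0`-indexed) is a cell of the Young diagram of `lam`. -/
def IsCell (lam : IntegerPartition) (i j : ℕ) : Prop := j < lam.parts i

/-- The hook length of the cell `(i, j)` (both `0`-indexed): the number of
cells directly to the right, plus the number directly below, plus one. -/
noncomputable def hook (lam : IntegerPartition) (i j : ℕ) : ℕ :=
  (lam.parts i - j) + (lam.conjParts j - i) - 1

/-- A partition is a `t`-core if no hook length is divisible by `t`. -/
def IsCore (lam : IntegerPartition) (t : ℕ) : Prop :=
  ∀ i j, lam.IsCell i j → ¬ (t ∣ lam.hook i j)

/-- The size of the Durfee square: the largest `k` such that the partition has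
at least `k` parts of size at least `k`. -/
noncomputable def durfee (lam : IntegerPartition) : ℕ :=
  Nat.card {i : ℕ | i < lam.parts i}

/-- A partition has distinct parts if its (nonzero) parts are pairwise different. -/
def DistinctParts (lam : IntegerPartition) : Prop :=
  ∀ i j, lam.parts i ≠ 0 → lam.parts j ≠ 0 → i ≠ j → lam.parts i ≠ lam.parts j

/-- The set of main diagonal hook lengths of `lam`. -/
noncomputable def MD (lam : IntegerPartition) : Set ℕ :=
  {h | ∃ i < lam.durfee, lam.hook i i = h}

/-- `lam ∈ DS(t)`: `lam` is a self-conjugate `(t, t+1)`-core partition whose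
first `durfee lam` parts are pairwise distinct. -/
def InDS (lam : IntegerPartition) (t : ℕ) : Prop :=
  lam.IsSelfConjugate ∧ lam.IsCore t ∧ lam.IsCore (t + 1) ∧
    ∀ i j, i < lam.durfee → j < lam.durfee → i ≠ j → lam.parts i ≠ lam.parts j

end IntegerPartition

/-- `fDS t` is the number of partitions in `DS(t)`. -/
noncomputable def fDS (t : ℕ) : ℕ := Nat.card {lam : IntegerPartition // lam.InDS t}

/-- `gDS t` is the total number of main diagonal hooks of the partitions in `DS(t)`. -/
noncomputable def gDS (t : ℕ) : ℕ := ∑ᶠ (lam : IntegerPartition) (_ : lam.InDS t), lam.durfee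

/-- `hDS t` is the total size of the partitions in `DS(t)`. -/
noncomputable def hDS (t : ℕ) : ℕ := ∑ᶠ (lam : IntegerPartition) (_ : lam.InDS t), lam.size

namespace DSProof
open IntegerPartition

def cv (l : List ℕ) (k : ℕ) : ℕ := l.getD k 0

def SDec (l : List ℕ) : Prop := l.IsChain (fun a b => b < a)

def Gap2 (l : List ℕ) : Prop := l.IsChain (fun a b => b + 2 ≤ a)

def Good (t : ℕ) (l : List ℕ) : Prop :=
  Gap2 l ∧ (∀ c ∈ l, c < t ∧ 2 * c + 1 ≠ t ∧ 2 * c ≠ t) ∧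
    l.Pairwise (fun a b => a + b + 1 ≠ t ∧ a + b + 1 ≠ t + 1)

def cnt (l : List ℕ) (i : ℕ) : ℕ :=
  ((Finset.range l.length).filter (fun k => i ≤ cv l k + k)).card

def pparts (l : List ℕ) (i : ℕ) : ℕ :=
  if i < l.length then cv l i + i + 1 else cnt l i

lemma get_eq_cv (l : List ℕ) {i : ℕ} (h : i < l.length) : l.get ⟨i, h⟩ = cv l i := by
  rw [cv, List.getD_eq_getElem _ _ h, List.get_eq_getElem]

lemma getElem_eq_cv (l : List ℕ) {i : ℕ} (h : i < l.length) : l[i] = cv l i := by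
  rw [cv, List.getD_eq_getElem _ _ h]

lemma mem_cv {l : List ℕ} {k : ℕ} (hk : k < l.length) : cv l k ∈ l := by
  rw [cv, List.getD_eq_getElem _ _ hk]
  exact List.getElem_mem hk

lemma mem_index {l : List ℕ} {c : ℕ} (hc : c ∈ l) : ∃ k, k < l.length ∧ cv l k = c := by
  obtain ⟨⟨k, hk⟩, rfl⟩ := List.mem_iff_get.1 hc
  exact ⟨k, hk, (get_eq_cv l hk).symm⟩

lemma sdec_step {l : List ℕ} (h : SDec l) {k : ℕ} (hk : k + 1 < l.length) :
    cv l (k + 1) < cv l k := by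
  have := List.isChain_iff_getElem.1 h k (by omega)
  simp only [getElem_eq_cv] at this
  exact this

lemma gap2_step {l : List ℕ} (h : Gap2 l) {k : ℕ} (hk : k + 1 < l.length) :
    cv l (k + 1) + 2 ≤ cv l k := by
  have := List.isChain_iff_getElem.1 h k (by omega)
  simp only [getElem_eq_cv] at this
  exact this

lemma gap2_sdec {l : List ℕ} (h : Gap2 l) : SDec l := h.imp (fun hb => by omega)

lemma cv_add {l : List ℕ} (h : SDec l) (k d : ℕ) (hd : k + d < l.length) :
    cv l (k + d) + d ≤ cv l k := by
  induction d with
  | zero => simp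
  | succ d ih =>
    have h1 : cv l (k + d + 1) < cv l (k + d) := sdec_step h (by omega)
    have h2 := ih (by omega)
    have he : k + (d + 1) = k + d + 1 := rfl
    rw [he]
    omega

lemma gap2_add {l : List ℕ} (h : Gap2 l) (k d : ℕ) (hd : k + d < l.length) :
    cv l (k + d) + 2 * d ≤ cv l k := by
  induction d with
  | zero => simp
  | succ d ih =>
    have h1 : cv l (k + d + 1) + 2 ≤ cv l (k + d) := gap2_step h (by omega)
    have h2 := ih (by omega)
    have he : k + (d + 1) = k + d + 1 := rfl
    rw [he]
    omega

lemma cv_le_cv0 {l : List ℕ} (h : SDec l) {k : ℕ} (hk : k < l.length) : cv l k ≤ cv l 0 := by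
  have := cv_add h 0 k (by omega)
  rw [Nat.zero_add] at this
  omega

lemma s_le {l : List ℕ} (h : SDec l) {i : ℕ} (hi : i < l.length) :
    l.length ≤ cv l i + i + 1 := by
  have h1 := cv_add h i (l.length - 1 - i) (by omega)
  have h2 : i + (l.length - 1 - i) = l.length - 1 := by omega
  rw [h2] at h1
  omega

lemma cnt_le (l : List ℕ) (i : ℕ) : cnt l i ≤ l.length :=
  le_trans (Finset.card_filter_le _ _) (by simp)

lemma filter_card_lt_iff {n : ℕ} {p : ℕ → Prop} [DecidablePred p]
    (anti : ∀ k k', k ≤ k' → k' < n → p k' → p k) (k : ℕ) :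
    k < ((Finset.range n).filter p).card ↔ k < n ∧ p k := by
  constructor
  · intro hk
    have hcard : ((Finset.range n).filter p).card ≤ n :=
      le_trans (Finset.card_filter_le _ _) (by simp)
    have hkn : k < n := by omega
    refine ⟨hkn, ?_⟩
    by_contra hpk
    have hsub : (Finset.range n).filter p ⊆ Finset.range k := by
      intro x hx
      simp only [Finset.mem_filter, Finset.mem_range] at hx ⊢
      by_contra hxk
      push_neg at hxk
      exact hpk (anti k x hxk hx.1 hx.2)
    have := Finset.card_le_card hsub
    simp only [Finset.card_range] at this
    omega
  · rintro ⟨hkn, hpk⟩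
    have hsub : Finset.range (k + 1) ⊆ (Finset.range n).filter p := by
      intro x hx
      simp only [Finset.mem_range] at hx
      simp only [Finset.mem_filter, Finset.mem_range]
      exact ⟨by omega, anti x k (by omega) hkn hpk⟩
    have := Finset.card_le_card hsub
    simp only [Finset.card_range] at this
    omega

lemma lt_cnt_iff {l : List ℕ} (h : SDec l) {k i : ℕ} :
    k < cnt l i ↔ k < l.length ∧ i ≤ cv l k + k := by
  apply filter_card_lt_iff
  intro a b hab hb hpb
  have h1 := cv_add h a (b - a) (by omega)
  have h2 : a + (b - a) = b := by omega
  rw [h2] at h1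
  omega

lemma pparts_lt {l : List ℕ} {i : ℕ} (hi : i < l.length) : pparts l i = cv l i + i + 1 :=
  if_pos hi

lemma pparts_ge {l : List ℕ} {i : ℕ} (hi : l.length ≤ i) : pparts l i = cnt l i :=
  if_neg (by omega)

lemma pparts_antitone {l : List ℕ} (h : SDec l) : ∀ i j, i ≤ j → pparts l j ≤ pparts l i := by
  intro i j hij
  by_cases hj : j < l.length
  · have hi : i < l.length := by omega
    rw [pparts_lt hi, pparts_lt hj]
    have h1 := cv_add h i (j - i) (by omega)
    have h2 : i + (j - i) = j := by omega
    rw [h2] at h1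
    omega
  · push_neg at hj
    rw [pparts_ge (by omega)]
    by_cases hi : i < l.length
    · rw [pparts_lt hi]
      have := cnt_le l j
      have := s_le h hi
      omega
    · push_neg at hi
      rw [pparts_ge (by omega)]
      apply Finset.card_le_card
      intro x hx
      simp only [Finset.mem_filter, Finset.mem_range] at hx ⊢
      exact ⟨hx.1, by omega⟩

lemma pparts_zero {l : List ℕ} (h : SDec l) {i : ℕ} (hi : cv l 0 + l.length + 1 ≤ i) :
    pparts l i = 0 := by
  have hil : l.length ≤ i := by omega
  rw [pparts_ge hil, cnt, Finset.card_eq_zero, Finset.filter_eq_empty_iff]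
  intro k hk
  simp only [Finset.mem_range] at hk
  have := cv_le_cv0 h hk
  omega

open scoped Classical in
noncomputable def P (l : List ℕ) : IntegerPartition :=
  if h : SDec l then
    { parts := pparts l
      antitone := pparts_antitone h
      finite := ⟨cv l 0 + l.length + 1, fun _ hi => pparts_zero h hi⟩ }
  else
    { parts := fun _ => 0, antitone := fun _ _ _ => le_rfl, finite := ⟨0, fun _ _ => rfl⟩ }

lemma P_parts {l : List ℕ} (h : SDec l) : (P l).parts = pparts l := by
  rw [P]
  rw [dif_pos h]

lemma natCard_setOf {p : ℕ → Prop} {n : ℕ} (h : ∀ i, i < n ↔ p i) :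
    Nat.card {i : ℕ | p i} = n := by
  have hs : {i : ℕ | p i} = Set.Iio n := by
    ext i
    simp only [Set.mem_setOf_eq, Set.mem_Iio]
    exact (h i).symm
  rw [hs]
  simp [Nat.card_eq_card_toFinset]

lemma setOf_eq_Iio {p : ℕ → Prop} (dc : ∀ m n, m ≤ n → p n → p m)
    (bd : ∃ N, ∀ n, N ≤ n → ¬ p n) : ∀ i, i < Nat.card {i : ℕ | p i} ↔ p i := by
  classical
  obtain ⟨N, hN⟩ := bd
  have hfind : ∃ n, ¬ p n := ⟨N, hN N le_rfl⟩
  have hiff : ∀ x, p x ↔ x < Nat.find hfind := by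
    intro x
    constructor
    · intro hx
      by_contra hxn
      push_neg at hxn
      exact Nat.find_spec hfind (dc _ x hxn hx)
    · intro hx
      have := Nat.find_min hfind hx
      simpa using this
  have hcard : Nat.card {i : ℕ | p i} = Nat.find hfind :=
    natCard_setOf (fun i => ⟨fun hi => (hiff i).2 hi, fun hi => (hiff i).1 hi⟩)
  intro i
  rw [hcard]
  exact ⟨fun hi => (hiff i).2 hi, fun hi => (hiff i).1 hi⟩

lemma lt_conjParts_iff (lam : IntegerPartition) (j i : ℕ) :
    i < lam.conjParts j ↔ j < lam.parts i := by
  have := setOf_eq_Iio (p := fun i => j < lam.parts i)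
    (fun m n hmn hpn => lt_of_lt_of_le hpn (lam.antitone m n hmn))
    (by
      obtain ⟨N, hN⟩ := lam.finite
      exact ⟨N, fun n hn => by show ¬ j < lam.parts n; rw [hN n hn]; omega⟩)
  exact this i

lemma lt_durfee_iff (lam : IntegerPartition) (i : ℕ) : i < lam.durfee ↔ i < lam.parts i := by
  have := setOf_eq_Iio (p := fun i => i < lam.parts i)
    (fun m n hmn hpn => lt_of_le_of_lt hmn (lt_of_lt_of_le hpn (lam.antitone m n hmn)))
    (by
      obtain ⟨N, hN⟩ := lam.finite
      exact ⟨N, fun n hn => by show ¬ n < lam.parts n; rw [hN n hn]; omega⟩)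
  exact this i

lemma pparts_key {l : List ℕ} (h : SDec l) : ∀ i j, i < pparts l j → j < pparts l i := by
  intro i j hij
  by_cases hj : j < l.length
  · rw [pparts_lt hj] at hij
    by_cases hi : i < l.length
    · rw [pparts_lt hi]
      rcases le_or_gt j i with hle | hlt
      · omega
      · have h1 := cv_add h i (j - i) (by omega)
        have h2 : i + (j - i) = j := by omega
        rw [h2] at h1
        omega
    · push_neg at hi
      rw [pparts_ge hi, lt_cnt_iff h]
      exact ⟨hj, by omega⟩
  · push_neg at hj
    rw [pparts_ge hj, lt_cnt_iff h] at hij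
    rw [pparts_lt hij.1]
    omega

lemma isSelfConj_P {l : List ℕ} (h : SDec l) : (P l).IsSelfConjugate := by
  intro j
  rw [P_parts h]
  have h1 : (P l).conjParts j = Nat.card {i : ℕ | j < pparts l i} := by
    simp only [IntegerPartition.conjParts, P_parts h]
  rw [h1]
  exact natCard_setOf (fun i => ⟨fun hi => pparts_key h _ _ hi, fun hi => pparts_key h _ _ hi⟩)

lemma conjParts_P {l : List ℕ} (h : SDec l) (j : ℕ) : (P l).conjParts j = pparts l j :=
  (isSelfConj_P h j).trans (by rw [P_parts h])

lemma durfee_P {l : List ℕ} (h : SDec l) : (P l).durfee = l.length := by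
  simp only [IntegerPartition.durfee, P_parts h]
  apply natCard_setOf
  intro i
  constructor
  · intro hi
    rw [pparts_lt hi]
    omega
  · intro hi
    by_contra hc
    push_neg at hc
    rw [pparts_ge hc] at hi
    have := cnt_le l i
    omega

lemma sum_getD : ∀ (l : List ℕ), ∑ k ∈ Finset.range l.length, cv l k = l.sum := by
  intro l
  induction l with
  | nil => simp
  | cons a tl ih =>
    rw [List.length_cons, Finset.sum_range_succ']
    simp only [cv, List.getD_cons_succ, List.getD_cons_zero, List.sum_cons]
    simp only [cv] at ih
    omega

lemma size_P {l : List ℕ} (h : SDec l) : (P l).size = 2 * l.sum + l.length := by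
  have hsupp : Function.support ((P l).parts) ⊆ ↑(Finset.range (cv l 0 + l.length + 1)) := by
    intro i hi
    simp only [Function.mem_support, P_parts h] at hi
    simp only [Finset.coe_range, Set.mem_Iio]
    by_contra hc
    push_neg at hc
    exact hi (pparts_zero h (by omega))
  rw [IntegerPartition.size, finsum_eq_sum_of_support_subset _ hsupp]
  simp only [P_parts h]
  set n := l.length with hn
  set N := cv l 0 + n + 1 with hN
  have hnN : n ≤ N := by omega
  rw [Finset.range_eq_Ico, ← Finset.sum_Ico_consecutive _ (Nat.zero_le n) hnN]
  have h1 : ∑ i ∈ Finset.Ico 0 n, pparts l i = l.sum + (∑ i ∈ Finset.range n, i) + n := by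
    rw [← Finset.range_eq_Ico]
    rw [Finset.sum_congr rfl (fun i hi => pparts_lt (Finset.mem_range.1 hi))]
    rw [Finset.sum_add_distrib, Finset.sum_add_distrib, sum_getD]
    simp
    rfl
  have h2 : ∑ i ∈ Finset.Ico n N, pparts l i = ∑ k ∈ Finset.range n, (cv l k + k + 1 - n) := by
    rw [Finset.sum_congr rfl (fun i hi => pparts_ge (Finset.mem_Ico.1 hi).1)]
    have hc : ∀ i, cnt l i = ∑ k ∈ Finset.range n, if i ≤ cv l k + k then 1 else 0 := by
      intro i
      rw [cnt, Finset.card_filter]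
    rw [Finset.sum_congr rfl (fun i _ => hc i), Finset.sum_comm]
    apply Finset.sum_congr rfl
    intro k hk
    have hk' : k < n := Finset.mem_range.1 hk
    have hb1 : n ≤ cv l k + k + 1 := s_le h hk'
    have hb2 : cv l k + k < N := by
      have := cv_le_cv0 h hk'
      omega
    rw [← Finset.card_filter]
    have hfe : Finset.filter (fun i => i ≤ cv l k + k) (Finset.Ico n N) =
        Finset.Ico n (cv l k + k + 1) := by
      ext x
      simp only [Finset.mem_filter, Finset.mem_Ico]
      omega
    rw [hfe, Nat.card_Ico]
  rw [h1, h2]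
  have h3 : ∑ k ∈ Finset.range n, (cv l k + k + 1 - n) + n * n
      = ∑ k ∈ Finset.range n, (cv l k + k + 1) := by
    have hcg : ∀ k ∈ Finset.range n, cv l k + k + 1 = (cv l k + k + 1 - n) + n := by
      intro k hk
      have := s_le h (Finset.mem_range.1 hk)
      omega
    rw [Finset.sum_congr rfl hcg, Finset.sum_add_distrib, Finset.sum_const, Finset.card_range,
      smul_eq_mul]
  have h4 : ∑ k ∈ Finset.range n, (cv l k + k + 1) = l.sum + (∑ i ∈ Finset.range n, i) + n := by
    rw [Finset.sum_add_distrib, Finset.sum_add_distrib, sum_getD]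
    simp
  have h5 := Finset.sum_range_id_mul_two n
  have h6 : n * (n - 1) + n = n * n := by
    cases n with
    | zero => simp
    | succ m =>
      simp only [Nat.succ_sub_one]
      ring
  rw [h4] at h3
  generalize n * n = Q at h3 h6
  generalize n * (n - 1) = R at h5 h6
  omega

lemma hook_in {l : List ℕ} (h : SDec l) {i j : ℕ} (hi : i < l.length) (hj : j < l.length) :
    (P l).hook i j = cv l i + cv l j + 1 := by
  rw [IntegerPartition.hook, conjParts_P h, P_parts h, pparts_lt hi, pparts_lt hj]
  have := s_le h hi
  have := s_le h hj
  omega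

lemma hook_pos {l : List ℕ} (h : SDec l) {i j : ℕ} (hcell : (P l).IsCell i j) :
    1 ≤ (P l).hook i j := by
  rw [IntegerPartition.IsCell] at hcell
  have h1 : j < pparts l i := by rwa [P_parts h] at hcell
  have h2 : i < pparts l j := pparts_key h j i h1
  rw [IntegerPartition.hook, conjParts_P h, P_parts h]
  omega

lemma hook_out_bound {l : List ℕ} (h : SDec l) {i j : ℕ} (hcell : (P l).IsCell i j)
    (hout : l.length ≤ i ∨ l.length ≤ j) : (P l).hook i j ≤ cv l 0 := by
  rw [IntegerPartition.IsCell, P_parts h] at hcell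
  rw [IntegerPartition.hook, conjParts_P h, P_parts h]
  rcases hout with hi | hj
  · rw [pparts_ge hi] at hcell ⊢
    have hjl : j < l.length := lt_of_lt_of_le hcell (cnt_le l i)
    rw [pparts_lt hjl]
    have hcv : i ≤ cv l j + j := ((lt_cnt_iff h).1 hcell).2
    have := cnt_le l i
    have := cv_le_cv0 h hjl
    omega
  · by_cases hi : i < l.length
    · rw [pparts_lt hi] at hcell ⊢
      rw [pparts_ge hj]
      have hcnt : i < cnt l j := (lt_cnt_iff h).2 ⟨hi, by omega⟩
      have := cnt_le l j
      have := cv_le_cv0 h hi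
      omega
    · push_neg at hi
      rw [pparts_ge hi] at hcell
      have := cnt_le l i
      omega

lemma dvd_eq_self {T v : ℕ} (hdvd : T ∣ v) (h1 : 1 ≤ v) (h2 : v < 2 * T) : v = T := by
  obtain ⟨c, rfl⟩ := hdvd
  have hc1 : c ≠ 0 := by
    rintro rfl
    simp at h1
  have hc2 : c < 2 := by
    by_contra hc
    push_neg at hc
    have := Nat.mul_le_mul_left T hc
    omega
  interval_cases c <;> omega

lemma pairwise_cv {l : List ℕ} {R : ℕ → ℕ → Prop} (hp : l.Pairwise R) {i j : ℕ}
    (hi : i < l.length) (hj : j < l.length) (hij : i < j) : R (cv l i) (cv l j) := by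
  have := List.pairwise_iff_get.1 hp ⟨i, hi⟩ ⟨j, hj⟩ (Fin.mk_lt_mk.2 hij)
  simpa only [get_eq_cv] using this

lemma cells_empty {i j : ℕ} (hcell : (P ([] : List ℕ)).IsCell i j) : False := by
  have hs : SDec ([] : List ℕ) := List.isChain_nil
  rw [IntegerPartition.IsCell, P_parts hs, pparts_ge (by simp), cnt] at hcell
  simp at hcell

lemma InDS_P {t : ℕ} {l : List ℕ} (hg : Good t l) : (P l).InDS t := by
  obtain ⟨hgap, helem, hsum⟩ := hg
  have hsd : SDec l := gap2_sdec hgap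
  have hlen : ∀ k, k < l.length → cv l k < t ∧ 2 * cv l k + 1 ≠ t ∧ 2 * cv l k ≠ t :=
    fun k hk => helem _ (mem_cv hk)
  have hcore : ∀ T, T = t ∨ T = t + 1 → (P l).IsCore T := by
    intro T hT i j hcell hdvd
    have hpos := hook_pos hsd hcell
    rcases Nat.eq_zero_or_pos t with rfl | htpos
    ·
      have hl : l = [] := by
        cases l with
        | nil => rfl
        | cons a tl => exact absurd (helem a (by simp)).1 (by omega)
      subst hl
      exact cells_empty hcell
    by_cases hij : i < l.length ∧ j < l.length
    · rw [hook_in hsd hij.1 hij.2] at hdvd hpos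
      have hci := hlen i hij.1
      have hcj := hlen j hij.2
      have heq : cv l i + cv l j + 1 = T := dvd_eq_self hdvd hpos (by omega)
      rcases eq_or_ne i j with rfl | hne
      · omega
      · rcases lt_or_gt_of_ne hne with hlt' | hgt
        · have := pairwise_cv hsum hij.1 hij.2 hlt'
          omega
        · have := pairwise_cv hsum hij.2 hij.1 hgt
          omega
    · have hout : l.length ≤ i ∨ l.length ≤ j := by omega
      have hl : l ≠ [] := by
        rintro rfl
        exact cells_empty hcell
      have hb := hook_out_bound hsd hcell hout
      have hc0 := hlen 0 (List.length_pos_iff.2 hl)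
      have := Nat.le_of_dvd (by omega) hdvd
      omega
  refine ⟨isSelfConj_P hsd, hcore t (Or.inl rfl), hcore (t+1) (Or.inr rfl), ?_⟩
  intro i j hi hj hij
  rw [durfee_P hsd] at hi hj
  rw [P_parts hsd, pparts_lt hi, pparts_lt hj]
  rcases lt_or_gt_of_ne hij with hlt | hgt
  · have h1 := gap2_add hgap i (j - i) (by omega)
    have h2 : i + (j - i) = j := by omega
    rw [h2] at h1
    omega
  · have h1 := gap2_add hgap j (i - j) (by omega)
    have h2 : j + (i - j) = i := by omega
    rw [h2] at h1
    omega

noncomputable def ell (lam : IntegerPartition) : List ℕ := (List.range lam.durfee).map (fun i => lam.parts i - i - 1)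

lemma ell_length (lam : IntegerPartition) : (ell lam).length = lam.durfee := by simp [ell]

lemma cv_ell (lam : IntegerPartition) {i : ℕ} (hi : i < lam.durfee) :
    cv (ell lam) i = lam.parts i - i - 1 := by
  have h1 : i < ((List.range lam.durfee).map (fun i => lam.parts i - i - 1)).length := by
    simpa using hi
  rw [cv, ell, List.getD_eq_getElem _ _ h1, List.getElem_map]
  simp

lemma parts_dlt (lam : IntegerPartition) {i : ℕ} (hi : i < lam.durfee) : i < lam.parts i :=
  (lt_durfee_iff lam i).1 hi

lemma parts_dge (lam : IntegerPartition) (hsc : lam.IsSelfConjugate) {k : ℕ}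
    (hk : lam.durfee ≤ k) : lam.parts k ≤ lam.durfee := by
  by_contra hc
  push_neg at hc
  have h2 : k < lam.conjParts lam.durfee := (lt_conjParts_iff lam _ k).2 hc
  rw [hsc] at h2
  have h3 : lam.durfee < lam.parts lam.durfee := by omega
  have := (lt_durfee_iff lam lam.durfee).2 h3
  omega

lemma sdec_ell (lam : IntegerPartition) : SDec (ell lam) := by
  rw [SDec, List.isChain_iff_getElem]
  intro i hi
  simp only [getElem_eq_cv]
  have hlen : (ell lam).length = lam.durfee := ell_length lam
  have hi1 : i + 1 < lam.durfee := by omega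
  have hi0 : i < lam.durfee := by omega
  rw [cv_ell _ hi0, cv_ell _ hi1]
  have h1 := parts_dlt lam hi0
  have h2 := parts_dlt lam hi1
  have h3 := lam.antitone i (i + 1) (by omega)
  omega

lemma pext {p q : IntegerPartition} (h : p.parts = q.parts) : p = q := by
  cases p
  cases q
  cases h
  rfl

lemma P_ell (lam : IntegerPartition) (hsc : lam.IsSelfConjugate) : P (ell lam) = lam := by
  apply pext
  funext i
  rw [P_parts (sdec_ell lam)]
  by_cases hi : i < lam.durfee
  · rw [pparts_lt (by rw [ell_length]; exact hi), cv_ell _ hi]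
    have := parts_dlt lam hi
    omega
  · push_neg at hi
    rw [pparts_ge (by rw [ell_length]; exact hi)]
    have hiff : ∀ k, k < cnt (ell lam) i ↔ i < lam.parts k := by
      intro k
      rw [lt_cnt_iff (sdec_ell lam), ell_length]
      constructor
      · rintro ⟨hk, hcv⟩
        rw [cv_ell _ hk] at hcv
        have := parts_dlt lam hk
        omega
      · intro hk
        have hkd : k < lam.durfee := by
          by_contra hc
          push_neg at hc
          have := parts_dge lam hsc hc
          omega
        refine ⟨hkd, ?_⟩
        rw [cv_ell _ hkd]
        have := parts_dlt lam hkd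
        omega
    have h2 : lam.conjParts i = cnt (ell lam) i := by
      simp only [IntegerPartition.conjParts]
      exact natCard_setOf hiff
    rw [← hsc i, h2]

lemma exists_hook_cell {l : List ℕ} (h : SDec l) (hl : l ≠ []) {w : ℕ}
    (hw : w < cv l 0) (hnm : w ∉ l) :
    ∃ j, (P l).IsCell 0 j ∧ (P l).hook 0 j = cv l 0 - w := by
  classical
  set n := l.length with hn
  set m := ((Finset.range n).filter (fun k => w < cv l k)).card with hm
  have hmono : ∀ a b, a ≤ b → b < n → w < cv l b → w < cv l a := by
    intro a b hab hb hwb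
    have h1 := cv_add h a (b - a) (by omega)
    have h2 : a + (b - a) = b := by omega
    rw [h2] at h1
    omega
  have hmlt : ∀ k, k < m ↔ k < n ∧ w < cv l k := fun k => filter_card_lt_iff hmono k
  have hmn : m ≤ n := le_trans (Finset.card_filter_le _ _) (by simp)
  have h0 : 0 < n := List.length_pos_iff.2 hl
  have hm1 : 0 < m := (hmlt 0).2 ⟨h0, hw⟩
  have hwm : w + m ≤ cv l 0 := by
    have hm2 := (hmlt (m - 1)).1 (by omega)
    have hcv := cv_add h 0 (m - 1) (by omega)
    rw [Nat.zero_add] at hcv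
    omega
  have hcvm : m < n → cv l m + 1 ≤ w := by
    intro hmn'
    have hle : ¬ (w < cv l m) := by
      intro hc
      exact absurd ((hmlt m).2 ⟨hmn', hc⟩) (by omega)
    have hne : cv l m ≠ w := fun he => hnm (he ▸ mem_cv hmn')
    omega
  have hnwm : n ≤ w + m := by
    by_cases hmn' : m < n
    · have h1 := hcvm hmn'
      have h2 := cv_add h m (n - 1 - m) (by omega)
      have h3 : m + (n - 1 - m) = n - 1 := by omega
      rw [h3] at h2
      omega
    · omega
  have hcnt : cnt l (w + m) = m := by
    have hiff : ∀ k, k < cnt l (w + m) ↔ k < m := by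
      intro k
      constructor
      · intro hk
        rw [lt_cnt_iff h] at hk
        obtain ⟨hkn, hkcv⟩ := hk
        by_contra hkm
        push_neg at hkm
        have hmn' : m < n := by omega
        have h1 := hcvm hmn'
        have h2 := cv_add h m (k - m) (by omega)
        have h3 : m + (k - m) = k := by omega
        rw [h3] at h2
        omega
      · intro hkm
        rw [lt_cnt_iff h]
        refine ⟨by omega, ?_⟩
        have hk1 := (hmlt (m - 1)).1 (by omega)
        have h2 := cv_add h k (m - 1 - k) (by omega)
        have h3 : k + (m - 1 - k) = m - 1 := by omega
        rw [h3] at h2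
        omega
    have h1 := hiff (cnt l (w + m))
    have h2 := hiff m
    omega
  refine ⟨w + m, ?_, ?_⟩
  · rw [IntegerPartition.IsCell, P_parts h, pparts_lt h0]
    omega
  · rw [IntegerPartition.hook, P_parts h, conjParts_P h, pparts_lt h0, pparts_ge (by omega), hcnt]
    omega

lemma good_of_InDS {t : ℕ} {lam : IntegerPartition} (hin : lam.InDS t) : Good t (ell lam) := by
  obtain ⟨hsc, hcore, hcore1, hdist⟩ := hin
  have hPl : P (ell lam) = lam := P_ell lam hsc
  rw [← hPl] at hcore hcore1 hdist
  set l := ell lam with hldef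
  have hsd : SDec l := sdec_ell lam
  have hlen0 : l.length = lam.durfee := ell_length lam
  by_cases hl : l = []
  · rw [hl]
    exact ⟨List.isChain_nil, by simp, List.Pairwise.nil⟩
  have hpos : 0 < l.length := List.length_pos_iff.2 hl
  have hcell00 : (P l).IsCell 0 0 := by
    rw [IntegerPartition.IsCell, P_parts hsd, pparts_lt hpos]
    omega
  rcases Nat.eq_zero_or_pos t with rfl | ht
  · exact absurd (one_dvd _) (hcore1 0 0 hcell00)
  -- gap2 from distinctness
  have hgap : Gap2 l := by
    rw [Gap2, List.isChain_iff_getElem]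
    intro i hi
    simp only [getElem_eq_cv]
    have hi1 : i + 1 < l.length := by omega
    have hd := hdist i (i + 1) (by rw [durfee_P hsd]; omega) (by rw [durfee_P hsd]; omega)
      (by omega)
    rw [P_parts hsd, pparts_lt (by omega), pparts_lt hi1] at hd
    have := sdec_step hsd hi1
    omega
  haveI : IsTrans ℕ (fun a b => b + 2 ≤ a) := ⟨fun a b c h1 h2 => by omega⟩
  have hpw : l.Pairwise (fun a b => b + 2 ≤ a) := List.isChain_iff_pairwise.1 hgap
  have hpair2 : ∀ a ∈ l, ∀ b ∈ l, a ≠ b → (a + 2 ≤ b ∨ b + 2 ≤ a) := by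
    have hps : l.Pairwise (fun a b : ℕ => a + 2 ≤ b ∨ b + 2 ≤ a) :=
      hpw.imp (fun hab => Or.inr hab)
    intro a ha b hb hab
    haveI : Std.Symm (fun a b : ℕ => a + 2 ≤ b ∨ b + 2 ≤ a) := ⟨fun x y hxy => hxy.symm⟩
    exact hps.forall ha hb hab
  have hdiag : ∀ k, k < l.length → 2 * cv l k + 1 ≠ t ∧ 2 * cv l k ≠ t := by
    intro k hk
    have hcell : (P l).IsCell k k := by
      rw [IntegerPartition.IsCell, P_parts hsd, pparts_lt hk]
      omega
    have hhk : (P l).hook k k = 2 * cv l k + 1 := by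
      rw [hook_in hsd hk hk]
      ring
    constructor
    · intro he
      exact hcore k k hcell (by rw [hhk, he])
    · intro he
      have h2 : (P l).hook k k = t + 1 := by omega
      exact hcore1 k k hcell (by rw [h2])
  have hc0 : cv l 0 < t := by
    by_contra hc
    push_neg at hc
    by_cases h1 : (cv l 0 - t) ∈ l
    · by_cases h2 : cv l 0 = t
      · have h0mem : (0 : ℕ) ∈ l := by
          have : cv l 0 - t = 0 := by omega
          rwa [this] at h1
        obtain ⟨k, hk, hcvk⟩ := mem_index h0mem
        have hcell : (P l).IsCell 0 k := by
          rw [IntegerPartition.IsCell, P_parts hsd, pparts_lt hpos]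
          have := s_le hsd hpos
          omega
        have hhook : (P l).hook 0 k = t + 1 := by
          rw [hook_in hsd hpos hk, hcvk]
          omega
        exact hcore1 0 k hcell (by rw [hhook])
      · by_cases h3 : (cv l 0 - (t + 1)) ∈ l
        · have hne : cv l 0 - t ≠ cv l 0 - (t + 1) := by omega
          have := hpair2 _ h1 _ h3 hne
          omega
        · obtain ⟨j, hcell, hhook⟩ := exists_hook_cell hsd hl
            (show cv l 0 - (t + 1) < cv l 0 by omega) h3
          have he : cv l 0 - (cv l 0 - (t + 1)) = t + 1 := by omega
          rw [he] at hhook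
          exact hcore1 0 j hcell (by rw [hhook])
    · obtain ⟨j, hcell, hhook⟩ := exists_hook_cell hsd hl
        (show cv l 0 - t < cv l 0 by omega) h1
      have he : cv l 0 - (cv l 0 - t) = t := by omega
      rw [he] at hhook
      exact hcore 0 j hcell (by rw [hhook])
  refine ⟨hgap, ?_, ?_⟩
  · intro c hcmem
    obtain ⟨k, hk, rfl⟩ := mem_index hcmem
    have := cv_le_cv0 hsd hk
    exact ⟨by omega, (hdiag k hk).1, (hdiag k hk).2⟩
  · rw [List.pairwise_iff_get]
    rintro ⟨i, hi⟩ ⟨j, hj⟩ hij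
    simp only [get_eq_cv]
    replace hij : i < j := Fin.mk_lt_mk.1 hij
    have hcell : (P l).IsCell i j := by
      rw [IntegerPartition.IsCell, P_parts hsd, pparts_lt hi]
      have := s_le hsd hi
      omega
    have h1 := hcore i j hcell
    have h2 := hcore1 i j hcell
    rw [hook_in hsd hi hj] at h1 h2
    have hbi := cv_le_cv0 hsd hi
    have hbj := cv_le_cv0 hsd hj
    constructor
    · intro he
      exact h1 (he ▸ dvd_refl t)
    · intro he
      exact h2 (he ▸ dvd_refl (t + 1))

def GS (t : ℕ) : Set (List ℕ) := {l | Good t l}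

lemma sdec_sublist : ∀ (t : ℕ) (l : List ℕ), SDec l → (∀ x ∈ l, x < t) →
    l.Sublist ((List.range t).reverse) := by
  intro t
  induction t with
  | zero =>
    intro l hs hx
    cases l with
    | nil => simp
    | cons a l' => exact absurd (hx a (by simp)) (by omega)
  | succ t ih =>
    intro l hs hx
    have hrev : (List.range (t + 1)).reverse = t :: (List.range t).reverse := by
      rw [List.range_succ, List.reverse_append]
      simp
    rw [hrev]
    cases l with
    | nil => simp
    | cons a l' =>
      have hsd' : SDec l' := hs.tail
      have hlt : ∀ x ∈ l', x < a := by
        intro x hxm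
        haveI : IsTrans ℕ (fun a b : ℕ => b < a) := ⟨fun a b c h1 h2 => by omega⟩
        exact List.rel_of_pairwise_cons (List.isChain_iff_pairwise.1 hs) hxm
      by_cases ha : a = t
      · subst ha
        exact (ih l' hsd' (fun x hxm => hlt x hxm)).cons₂ a
      · have hall : ∀ x ∈ a :: l', x < t := by
          intro x hxm
          rcases List.mem_cons.1 hxm with rfl | hxm'
          · have := hx x (by simp)
            omega
          · have := hlt x hxm'
            have := hx a (by simp)
            omega
        exact (ih _ hs hall).cons t

lemma GS_finite (t : ℕ) : (GS t).Finite := by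
  apply Set.Finite.subset (Finset.finite_toSet (((List.range t).reverse.sublists).toFinset))
  intro l hl
  simp only [Finset.mem_coe, List.mem_toFinset, List.mem_sublists]
  exact sdec_sublist t l (gap2_sdec hl.1) (fun x hx => (hl.2.1 x hx).1)

noncomputable def GF (t : ℕ) : Finset (List ℕ) := (GS_finite t).toFinset

lemma mem_GF {t : ℕ} {l : List ℕ} : l ∈ GF t ↔ Good t l := Set.Finite.mem_toFinset _

lemma GS_image (t : ℕ) : {lam : IntegerPartition | lam.InDS t} = P '' (GS t) := by
  ext lam
  simp only [Set.mem_setOf_eq, Set.mem_image]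
  constructor
  · intro hin
    exact ⟨ell lam, good_of_InDS hin, P_ell lam hin.1⟩
  · rintro ⟨l, hg, rfl⟩
    exact InDS_P hg

lemma P_injOn (t : ℕ) : Set.InjOn P (GS t) := by
  intro l1 h1 l2 h2 he
  have hs1 : SDec l1 := gap2_sdec h1.1
  have hs2 : SDec l2 := gap2_sdec h2.1
  have hlen : l1.length = l2.length := by
    rw [← durfee_P hs1, ← durfee_P hs2, he]
  apply List.ext_getElem hlen
  intro k h1' h2'
  have hp : (P l1).parts k = (P l2).parts k := by rw [he]
  rw [P_parts hs1, P_parts hs2, pparts_lt h1', pparts_lt h2'] at hp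
  have hcv : cv l1 k = cv l2 k := by omega
  rwa [cv, cv, List.getD_eq_getElem _ _ h1', List.getD_eq_getElem _ _ h2'] at hcv

lemma finsum_InDS (t : ℕ) (F : IntegerPartition → ℕ) :
    ∑ᶠ (lam : IntegerPartition) (_ : lam.InDS t), F lam = ∑ l ∈ GF t, F (P l) := by
  calc ∑ᶠ (lam : IntegerPartition) (_ : lam.InDS t), F lam
      = ∑ᶠ lam ∈ {lam : IntegerPartition | lam.InDS t}, F lam := rfl
    _ = ∑ᶠ lam ∈ P '' GS t, F lam := by rw [GS_image]
    _ = ∑ᶠ l ∈ GS t, F (P l) := finsum_mem_image (P_injOn t)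
    _ = ∑ l ∈ GF t, F (P l) := by
        rw [← finsum_mem_coe_finset, GF, Set.Finite.coe_toFinset]

lemma hDS_eq (t : ℕ) : hDS t = ∑ l ∈ GF t, (2 * l.sum + l.length) := by
  rw [hDS, finsum_InDS t IntegerPartition.size]
  exact Finset.sum_congr rfl (fun l hl => size_P (gap2_sdec (mem_GF.1 hl).1))

lemma gDS_eq (t : ℕ) : gDS t = ∑ l ∈ GF t, l.length := by
  rw [gDS, finsum_InDS t IntegerPartition.durfee]
  exact Finset.sum_congr rfl (fun l hl => durfee_P (gap2_sdec (mem_GF.1 hl).1))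

lemma fDS_eq (t : ℕ) : fDS t = (GF t).card := by
  rw [fDS]
  calc Nat.card {lam : IntegerPartition // lam.InDS t}
      = Set.ncard {lam : IntegerPartition | lam.InDS t} := rfl
    _ = (P '' GS t).ncard := by rw [GS_image]
    _ = (GS t).ncard := Set.ncard_image_of_injOn (P_injOn t)
    _ = (GF t).card := Set.ncard_eq_toFinset_card _ (GS_finite t)

lemma good_nil (t : ℕ) : Good t [] := ⟨List.isChain_nil, by simp, List.Pairwise.nil⟩

lemma GF0 : GF 0 = {[]} := by
  ext l
  rw [mem_GF, Finset.mem_singleton]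
  constructor
  · intro hg
    cases l with
    | nil => rfl
    | cons a tl => exact absurd (hg.2.1 a (by simp)).1 (by omega)
  · rintro rfl
    exact good_nil 0

lemma GF1 : GF 1 = {[]} := by
  ext l
  rw [mem_GF, Finset.mem_singleton]
  constructor
  · intro hg
    cases l with
    | nil => rfl
    | cons a tl =>
      have := hg.2.1 a (by simp)
      omega
  · rintro rfl
    exact good_nil 1

lemma GF2 : GF 2 = {[], [0]} := by
  ext l
  rw [mem_GF, Finset.mem_insert, Finset.mem_singleton]
  constructor
  · intro hg
    cases l with
    | nil => exact Or.inl rfl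
    | cons a tl =>
      have ha := hg.2.1 a (by simp)
      have ha0 : a = 0 := by omega
      cases tl with
      | nil =>
        right
        rw [ha0]
      | cons b tl' =>
        have hb := hg.2.1 b (by simp)
        have hb0 : b = 0 := by omega
        have := List.isChain_iff_getElem.1 hg.1 0 (by simp)
        simp [ha0, hb0] at this
  · rintro (rfl | rfl)
    · exact good_nil 2
    · refine ⟨List.isChain_singleton 0, ?_, List.pairwise_singleton _ 0⟩
      intro c hc
      simp at hc
      omega

def Phi1 (u : ℕ) (l : List ℕ) : List ℕ := (l.map (fun c => u + 2 - c)).reverse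

def Phi2 (u : ℕ) (l : List ℕ) : List ℕ := (l.map (fun c => u + 1 - c)).reverse ++ [0]

lemma gap2_iff_pairwise {l : List ℕ} : Gap2 l ↔ l.Pairwise (fun a b => b + 2 ≤ a) := by
  haveI : IsTrans ℕ (fun a b : ℕ => b + 2 ≤ a) := ⟨fun a b c h1 h2 => by omega⟩
  exact List.isChain_iff_pairwise

lemma pairwise_rm {R S : ℕ → ℕ → Prop} {f : ℕ → ℕ} {l : List ℕ}
    (h : l.Pairwise R) (himp : ∀ a ∈ l, ∀ b ∈ l, R a b → S (f b) (f a)) :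
    ((l.map f).reverse).Pairwise S := by
  rw [List.pairwise_reverse, List.pairwise_map]
  exact h.imp_of_mem (fun ha hb hr => himp _ ha _ hb hr)

lemma mem_rm {f : ℕ → ℕ} {l : List ℕ} {x : ℕ} :
    x ∈ (l.map f).reverse ↔ ∃ c ∈ l, f c = x := by
  simp

lemma map_map_id {m : ℕ} {l : List ℕ} (hb : ∀ c ∈ l, c ≤ m) :
    (l.map (fun c => m - c)).map (fun c => m - c) = l := by
  rw [List.map_map]
  have h : ∀ c ∈ l, ((fun c => m - c) ∘ (fun c => m - c)) c = id c := by
    intro c hc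
    have := hb c hc
    simp
    omega
  rw [List.map_congr_left h, List.map_id]

lemma phi1_invol {u : ℕ} {l : List ℕ} (hb : ∀ c ∈ l, c ≤ u + 2) :
    Phi1 u (Phi1 u l) = l := by
  rw [Phi1, Phi1, List.map_reverse, List.reverse_reverse, map_map_id hb]

lemma good1_fwd {u : ℕ} {l : List ℕ} (h : Good (u + 2) l) :
    Good (u + 3) (Phi1 u l) ∧ (0 : ℕ) ∉ Phi1 u l := by
  obtain ⟨hg, he, hp⟩ := h
  constructor
  · refine ⟨?_, ?_, ?_⟩
    · rw [Phi1, gap2_iff_pairwise]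
      apply pairwise_rm (gap2_iff_pairwise.1 hg)
      intro a ha b hb hr
      have h1 := he a ha
      have h2 := he b hb
      omega
    · intro x hx
      rw [Phi1, mem_rm] at hx
      obtain ⟨c, hc, rfl⟩ := hx
      have := he c hc
      refine ⟨by omega, by omega, by omega⟩
    · rw [Phi1]
      apply pairwise_rm hp
      intro a ha b hb hr
      have h1 := he a ha
      have h2 := he b hb
      exact ⟨by omega, by omega⟩
  · intro hx
    rw [Phi1, mem_rm] at hx
    obtain ⟨c, hc, hce⟩ := hx
    have := he c hc
    omega

lemma good1_bwd {u : ℕ} {l : List ℕ} (h : Good (u + 3) l) (h0 : (0 : ℕ) ∉ l) :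
    Good (u + 2) (Phi1 u l) ∧ Phi1 u (Phi1 u l) = l := by
  obtain ⟨hg, he, hp⟩ := h
  have hb : ∀ c ∈ l, 1 ≤ c ∧ c < u + 3 ∧ 2 * c + 1 ≠ u + 3 ∧ 2 * c ≠ u + 3 := by
    intro c hc
    have := he c hc
    have : c ≠ 0 := fun hce => h0 (hce ▸ hc)
    refine ⟨by omega, (he c hc).1, (he c hc).2.1, (he c hc).2.2⟩
  constructor
  · refine ⟨?_, ?_, ?_⟩
    · rw [Phi1, gap2_iff_pairwise]
      apply pairwise_rm (gap2_iff_pairwise.1 hg)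
      intro a ha b hb' hr
      have h1 := hb a ha
      have h2 := hb b hb'
      omega
    · intro x hx
      rw [Phi1, mem_rm] at hx
      obtain ⟨c, hc, rfl⟩ := hx
      have := hb c hc
      refine ⟨by omega, by omega, by omega⟩
    · rw [Phi1]
      apply pairwise_rm hp
      intro a ha b hb' hr
      have h1 := hb a ha
      have h2 := hb b hb'
      exact ⟨by omega, by omega⟩
  · exact phi1_invol (fun c hc => by have := hb c hc; omega)

lemma good2_fwd {u : ℕ} {l : List ℕ} (h : Good u l) :
    Good (u + 3) (Phi2 u l) ∧ (0 : ℕ) ∈ Phi2 u l := by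
  obtain ⟨hg, he, hp⟩ := h
  have hmem : ∀ x ∈ Phi2 u l, x = 0 ∨ ∃ c ∈ l, u + 1 - c = x := by
    intro x hx
    rw [Phi2] at hx
    rcases List.mem_append.1 hx with hx' | hx'
    · exact Or.inr (mem_rm.1 hx')
    · simp at hx'
      exact Or.inl hx'
  constructor
  · refine ⟨?_, ?_, ?_⟩
    · rw [Phi2, gap2_iff_pairwise, List.pairwise_append]
      refine ⟨?_, List.pairwise_singleton _ 0, ?_⟩
      · apply pairwise_rm (gap2_iff_pairwise.1 hg)
        intro a ha b hb hr
        have h1 := he a ha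
        have h2 := he b hb
        omega
      · intro a ha b hbm
        simp only [List.mem_singleton] at hbm
        subst hbm
        rw [mem_rm] at ha
        obtain ⟨c, hc, rfl⟩ := ha
        have := he c hc
        omega
    · intro x hx
      rcases hmem x hx with rfl | ⟨c, hc, rfl⟩
      · refine ⟨by omega, by omega, by omega⟩
      · have := he c hc
        refine ⟨by omega, by omega, by omega⟩
    · rw [Phi2, List.pairwise_append]
      refine ⟨?_, List.pairwise_singleton _ 0, ?_⟩
      · apply pairwise_rm hp
        intro a ha b hb hr
        have h1 := he a ha
        have h2 := he b hb
        exact ⟨by omega, by omega⟩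
      · intro a ha b hbm
        simp only [List.mem_singleton] at hbm
        subst hbm
        rw [mem_rm] at ha
        obtain ⟨c, hc, rfl⟩ := ha
        have := he c hc
        exact ⟨by omega, by omega⟩
  · rw [Phi2]
    simp

lemma good2_bwd {u : ℕ} {l : List ℕ} (h : Good (u + 3) l) (h0 : (0 : ℕ) ∈ l) :
    ∃ l', Good u l' ∧ Phi2 u l' = l := by
  obtain ⟨hg, he, hp⟩ := h
  have hne : l ≠ [] := List.ne_nil_of_mem h0
  have hpw : l.Pairwise (fun a b => b + 2 ≤ a) := gap2_iff_pairwise.1 hg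
  have hsplit := List.dropLast_append_getLast hne
  have hlast : l.getLast hne = 0 := by
    by_contra hy
    rw [← hsplit] at h0 hpw
    rcases List.mem_append.1 h0 with h0' | h0''
    · rw [List.pairwise_append] at hpw
      have := hpw.2.2 0 h0' (l.getLast hne) (by simp)
      omega
    · simp at h0''
      exact hy h0''.symm
  rw [hlast] at hsplit
  set l₀ := l.dropLast with hl0
  have hmem0 : ∀ x ∈ l₀, x ∈ l := fun x hx => by
    rw [← hsplit]
    exact List.mem_append_left _ hx
  have hps : (l₀ ++ [0]).Pairwise (fun a b : ℕ => a + b + 1 ≠ u + 3 ∧ a + b + 1 ≠ u + 4) := by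
    rw [hsplit]
    exact hp
  have hpg : (l₀ ++ [0]).Pairwise (fun a b : ℕ => b + 2 ≤ a) := by
    rw [hsplit]
    exact hpw
  rw [List.pairwise_append] at hps hpg
  have hb : ∀ x ∈ l₀, 2 ≤ x ∧ x ≤ u + 1 ∧ 2 * x ≠ u + 3 ∧ 2 * x + 1 ≠ u + 3 := by
    intro x hx
    have he' := he x (hmem0 x hx)
    have hc1 := hps.2.2 x hx 0 (by simp)
    have hc2 := hpg.2.2 x hx 0 (by simp)
    refine ⟨by omega, by omega, by omega, by omega⟩
  refine ⟨(l₀.map (fun c => u + 1 - c)).reverse, ⟨?_, ?_, ?_⟩, ?_⟩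
  · rw [gap2_iff_pairwise]
    apply pairwise_rm hpg.1
    intro a ha b hb' hr
    have h1 := hb a ha
    have h2 := hb b hb'
    omega
  · intro x hx
    rw [mem_rm] at hx
    obtain ⟨c, hc, rfl⟩ := hx
    have := hb c hc
    refine ⟨by omega, by omega, by omega⟩
  · apply pairwise_rm hps.1
    intro a ha b hb' hr
    have h1 := hb a ha
    have h2 := hb b hb'
    exact ⟨by omega, by omega⟩
  · rw [Phi2, List.map_reverse, List.reverse_reverse, map_map_id (fun c hc => by
      have := hb c hc; omega)]
    exact hsplit

lemma GF_split (u : ℕ) :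
    GF (u + 3) = (GF (u + 2)).image (Phi1 u) ∪ (GF u).image (Phi2 u) := by
  ext l
  simp only [Finset.mem_union, Finset.mem_image, mem_GF]
  constructor
  · intro hl
    by_cases h0 : (0 : ℕ) ∈ l
    · obtain ⟨l', hg, heq⟩ := good2_bwd hl h0
      exact Or.inr ⟨l', hg, heq⟩
    · obtain ⟨hg, heq⟩ := good1_bwd hl h0
      exact Or.inl ⟨Phi1 u l, hg, heq⟩
  · rintro (⟨l', hg, rfl⟩ | ⟨l', hg, rfl⟩)
    · exact (good1_fwd hg).1
    · exact (good2_fwd hg).1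

lemma GF_disj (u : ℕ) :
    Disjoint ((GF (u + 2)).image (Phi1 u)) ((GF u).image (Phi2 u)) := by
  rw [Finset.disjoint_left]
  intro l hl1 hl2
  simp only [Finset.mem_image, mem_GF] at hl1 hl2
  obtain ⟨a, ha, rfl⟩ := hl1
  obtain ⟨b, hb, hbe⟩ := hl2
  have h1 := (good1_fwd ha).2
  have h2 := (good2_fwd hb).2
  rw [hbe] at h2
  exact h1 h2

lemma phi1_inj (u : ℕ) : ∀ x ∈ GF (u + 2), ∀ y ∈ GF (u + 2), Phi1 u x = Phi1 u y → x = y := by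
  intro x hx y hy he
  have hbx : ∀ c ∈ x, c ≤ u + 2 := fun c hc => by
    have := (mem_GF.1 hx).2.1 c hc
    omega
  have hby : ∀ c ∈ y, c ≤ u + 2 := fun c hc => by
    have := (mem_GF.1 hy).2.1 c hc
    omega
  calc x = Phi1 u (Phi1 u x) := (phi1_invol hbx).symm
    _ = Phi1 u (Phi1 u y) := by rw [he]
    _ = y := phi1_invol hby

lemma phi2_inj (u : ℕ) : ∀ x ∈ GF u, ∀ y ∈ GF u, Phi2 u x = Phi2 u y → x = y := by
  intro x hx y hy he
  rw [Phi2, Phi2] at he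
  have he2 := List.append_cancel_right he
  rw [List.reverse_inj] at he2
  have he3 := congrArg (List.map (fun c => u + 1 - c)) he2
  have hbx : ∀ c ∈ x, c ≤ u + 1 := fun c hc => by
    have := (mem_GF.1 hx).2.1 c hc
    omega
  have hby : ∀ c ∈ y, c ≤ u + 1 := fun c hc => by
    have := (mem_GF.1 hy).2.1 c hc
    omega
  rwa [map_map_id hbx, map_map_id hby] at he3

lemma map_sub_sum {m : ℕ} : ∀ {l : List ℕ}, (∀ x ∈ l, x ≤ m) →
    (l.map (fun c => m - c)).sum + l.sum = m * l.length := by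
  intro l
  induction l with
  | nil => simp
  | cons a tl ih =>
    intro hb
    simp only [List.map_cons, List.sum_cons, List.length_cons]
    have h1 := hb a (by simp)
    have h2 := ih (fun x hx => hb x (by simp [hx]))
    have h3 : m * (tl.length + 1) = m * tl.length + m := by ring
    omega

lemma main_nat (u : ℕ) :
    hDS (u + 3) + hDS (u + 2) + hDS u
      = 2 * (u + 3) * gDS (u + 2) + (2 * u + 4) * gDS u + fDS u := by
  rw [hDS_eq, hDS_eq, hDS_eq, gDS_eq, gDS_eq, fDS_eq]
  rw [GF_split u, Finset.sum_union (GF_disj u), Finset.sum_image (phi1_inj u),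
    Finset.sum_image (phi2_inj u)]
  have e1 : ∀ l ∈ GF (u + 2),
      (2 * (Phi1 u l).sum + (Phi1 u l).length) + (2 * l.sum + l.length)
        = 2 * (u + 3) * l.length := by
    intro l hl
    have hg := mem_GF.1 hl
    have hs : (Phi1 u l).sum = (l.map (fun c => u + 2 - c)).sum := by
      rw [Phi1, List.sum_reverse]
    have hlen : (Phi1 u l).length = l.length := by simp [Phi1]
    have hms := map_sub_sum (m := u + 2) (l := l) (fun x hx => by
      have := hg.2.1 x hx
      omega)
    have hmul : 2 * (u + 3) * l.length = 2 * ((u + 2) * l.length) + 2 * l.length := by ring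
    omega
  have e2 : ∀ l ∈ GF u,
      (2 * (Phi2 u l).sum + (Phi2 u l).length) + (2 * l.sum + l.length)
        = (2 * u + 4) * l.length + 1 := by
    intro l hl
    have hg := mem_GF.1 hl
    have hs : (Phi2 u l).sum = (l.map (fun c => u + 1 - c)).sum := by
      rw [Phi2, List.sum_append, List.sum_reverse]
      simp
    have hlen : (Phi2 u l).length = l.length + 1 := by simp [Phi2]
    have hms := map_sub_sum (m := u + 1) (l := l) (fun x hx => by
      have := hg.2.1 x hx
      omega)
    have hmul : (2 * u + 4) * l.length = 2 * ((u + 1) * l.length) + 2 * l.length := by ring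
    omega
  have hA : ∑ l ∈ GF (u + 2), (2 * (Phi1 u l).sum + (Phi1 u l).length)
      + ∑ l ∈ GF (u + 2), (2 * l.sum + l.length)
      = 2 * (u + 3) * ∑ l ∈ GF (u + 2), l.length := by
    rw [← Finset.sum_add_distrib, Finset.sum_congr rfl e1, ← Finset.mul_sum]
  have hB : ∑ l ∈ GF u, (2 * (Phi2 u l).sum + (Phi2 u l).length)
      + ∑ l ∈ GF u, (2 * l.sum + l.length)
      = (2 * u + 4) * (∑ l ∈ GF u, l.length) + (GF u).card := by
    rw [← Finset.sum_add_distrib, Finset.sum_congr rfl e2, Finset.sum_add_distrib,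
      ← Finset.mul_sum, Finset.sum_const, smul_eq_mul, mul_one]
  generalize 2 * (u + 3) * (∑ l ∈ GF (u + 2), l.length) = Q1 at hA ⊢
  generalize (2 * u + 4) * (∑ l ∈ GF u, l.length) = Q2 at hB ⊢
  omega

end DSProof

/-- `h(0) = h(1) = 0`, `h(2) = 1`, and
`h(t) = 2t·g(t-1) + (2t-2)·g(t-3) - h(t-1) - h(t-3) + f(t-3)` for `t ≥ 3`. -/
theorem hDS_recurrence :
    hDS 0 = 0 ∧ hDS 1 = 0 ∧ hDS 2 = 1 ∧
      ∀ t : ℕ, 3 ≤ t →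
        (hDS t : ℤ) = 2 * t * gDS (t - 1) + (2 * t - 2) * gDS (t - 3)
          - hDS (t - 1) - hDS (t - 3) + fDS (t - 3) := by
  open DSProof in
  refine ⟨?_, ?_, ?_, ?_⟩
  · rw [DSProof.hDS_eq, DSProof.GF0]
    simp
  · rw [DSProof.hDS_eq, DSProof.GF1]
    simp
  · rw [DSProof.hDS_eq, DSProof.GF2]
    rw [Finset.sum_pair (by simp : ([] : List ℕ) ≠ [0])]
    simp
  · intro t ht
    obtain ⟨u, rfl⟩ : ∃ u, t = u + 3 := ⟨t - 3, by omega⟩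
    have key := DSProof.main_nat u
    have h1 : u + 3 - 1 = u + 2 := by omega
    have h3 : u + 3 - 3 = u := by omega
    rw [h1, h3]
    have keyZ := congrArg (Nat.cast : ℕ → ℤ) key
    push_cast at keyZ ⊢
    linear_combination keyZ
end

section
/- Let t ≥ 6 be even with (t/2 − 1 − 2·floor((2t+1)/12)) ≡ 0 (mod 3), or t ≥ 6 odd with ((t−1)/2 − 2·floor((2t+1)/12)) ≡ 2 (mod 3). Then the largest size m(t) of a partition in DS(t) equals (1/3)(t−1)(t+1−4·floor((2t+1)/12)) + floor((2t+1)/12)·(2t+1−2·floor((2t+1)/12)). -/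
/-- An integer partition, given by its (weakly decreasing, eventually zero)
sequence of parts, indexed from `0`. -/
structure IntPartition where
  parts : ℕ → ℕ
  antitone : ∀ i j, i ≤ j → parts j ≤ parts i
  finite : ∃ N, ∀ i, N ≤ i → parts i = 0

namespace IntPartition

/-- The size of a partition: the sum of its parts. -/
noncomputable def size (lam : IntPartition) : ℕ := ∑ᶠ i, lam.parts i

/-- The parts of the conjugate partition: `conjParts lam j` is the number of
rows `i` with `lam.parts i > j` (rows and columns are `0`-indexed). -/
noncomputable def conjParts (lam : IntPartition) (j : ℕ) : ℕ :=
  Nat.card {i : ℕ | j < lam.parts i}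

/-- A partition is self-conjugate if it equals its conjugate. -/
def IsSelfConjugate (lam : IntPartition) : Prop :=
  ∀ j, lam.conjParts j = lam.parts j

/-- `(i, j)` (both `0`-indexed) is a cell of the Young diagram of `lam`. -/
def IsCell (lam : IntPartition) (i j : ℕ) : Prop := j < lam.parts i

/-- The hook length of the cell `(i, j)` (both `0`-indexed): the number of
cells directly to the right, plus the number directly below, plus one. -/
noncomputable def hook (lam : IntPartition) (i j : ℕ) : ℕ :=
  (lam.parts i - j) + (lam.conjParts j - i) - 1

/-- A partition is a `t`-core if no hook length is divisible by `t`. -/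
def IsCore (lam : IntPartition) (t : ℕ) : Prop :=
  ∀ i j, lam.IsCell i j → ¬ (t ∣ lam.hook i j)

/-- The size of the Durfee square: the largest `k` such that the partition has
at least `k` parts of size at least `k`. -/
noncomputable def durfee (lam : IntPartition) : ℕ :=
  Nat.card {i : ℕ | i < lam.parts i}

/-- A partition has distinct parts if its (nonzero) parts are pairwise different. -/
def DistinctParts (lam : IntPartition) : Prop :=
  ∀ i j, lam.parts i ≠ 0 → lam.parts j ≠ 0 → i ≠ j → lam.parts i ≠ lam.parts j

/-- The set of main diagonal hook lengths of `lam`. -/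
noncomputable def MD (lam : IntPartition) : Set ℕ :=
  {h | ∃ i < lam.durfee, lam.hook i i = h}

/-- `lam ∈ DS(t)`: `lam` is a self-conjugate `(t, t+1)`-core partition whose
first `durfee lam` parts are pairwise distinct. -/
def InDS (lam : IntPartition) (t : ℕ) : Prop :=
  lam.IsSelfConjugate ∧ lam.IsCore t ∧ lam.IsCore (t + 1) ∧
    ∀ i j, i < lam.durfee → j < lam.durfee → i ≠ j → lam.parts i ≠ lam.parts j

end IntPartition


namespace IntPartition

theorem lt_conjParts_iff (lam : IntPartition) (i j : ℕ) :
    i < lam.conjParts j ↔ j < lam.parts i := by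
  obtain ⟨N, hN⟩ := lam.finite
  have hne : {m | lam.parts m ≤ j}.Nonempty := ⟨N, by simp [hN N le_rfl]⟩
  set K := sInf {m | lam.parts m ≤ j} with hK
  have hKmem : lam.parts K ≤ j := Nat.sInf_mem hne
  have hset : {i : ℕ | j < lam.parts i} = Set.Iio K := by
    ext m
    simp only [Set.mem_setOf_eq, Set.mem_Iio]
    constructor
    · intro h
      by_contra hm
      push_neg at hm
      exact absurd (le_trans (lam.antitone K m hm) hKmem) (by omega)
    · intro hm
      by_contra h
      push_neg at h
      have : K ≤ m := Nat.sInf_le (show m ∈ {m | lam.parts m ≤ j} from h)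
      omega
  have hcard : lam.conjParts j = K := by
    unfold conjParts
    rw [hset, Nat.card_eq_card_toFinset]
    simp
  rw [hcard]
  constructor
  · intro h
    have : i ∈ Set.Iio K := h
    rw [← hset] at this
    exact this
  · intro h
    have : i ∈ {i : ℕ | j < lam.parts i} := h
    rw [hset] at this
    exact this

theorem lt_durfee_iff (lam : IntPartition) (i : ℕ) :
    i < lam.durfee ↔ i < lam.parts i := by
  obtain ⟨N, hN⟩ := lam.finite
  have hne : {m | lam.parts m ≤ m}.Nonempty := ⟨N, by simp [hN N le_rfl]⟩
  set K := sInf {m | lam.parts m ≤ m} with hK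
  have hKmem : lam.parts K ≤ K := Nat.sInf_mem hne
  have hset : {i : ℕ | i < lam.parts i} = Set.Iio K := by
    ext m
    simp only [Set.mem_setOf_eq, Set.mem_Iio]
    constructor
    · intro h
      by_contra hm
      push_neg at hm
      have := lam.antitone K m hm
      omega
    · intro hm
      by_contra h
      push_neg at h
      have : K ≤ m := Nat.sInf_le (show m ∈ {m | lam.parts m ≤ m} from h)
      omega
  have hcard : lam.durfee = K := by
    unfold durfee
    rw [hset, Nat.card_eq_card_toFinset]
    simp
  rw [hcard]
  constructor
  · intro h
    have : i ∈ Set.Iio K := h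
    rw [← hset] at this
    exact this
  · intro h
    have : i ∈ {i : ℕ | i < lam.parts i} := h
    rw [hset] at this
    exact this
theorem conjParts_antitone (lam : IntPartition) {j k : ℕ} (h : j ≤ k) :
    lam.conjParts k ≤ lam.conjParts j := by
  by_contra hc
  push_neg at hc
  have h1 : lam.conjParts j < lam.conjParts k := hc
  have h2 : k < lam.parts (lam.conjParts j) :=
    (lam.lt_conjParts_iff _ _).mp h1
  have h3 : ¬ (lam.conjParts j < lam.conjParts j) := lt_irrefl _
  have h4 : ¬ (j < lam.parts (lam.conjParts j)) := fun hlt =>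
    h3 ((lam.lt_conjParts_iff _ _).mpr hlt)
  omega

theorem parts_le_durfee (lam : IntPartition) (hsc : lam.IsSelfConjugate) {i : ℕ}
    (hi : lam.durfee ≤ i) : lam.parts i ≤ lam.durfee := by
  have hd : lam.parts lam.durfee ≤ lam.durfee := by
    by_contra h
    push_neg at h
    have := (lam.lt_durfee_iff lam.durfee).mpr h
    omega
  by_contra h
  push_neg at h
  have h1 : lam.durfee < lam.conjParts i := by rw [hsc]; exact h
  have h2 : i < lam.parts lam.durfee := (lam.lt_conjParts_iff _ _).mp h1
  omega

theorem parts_gt_of_lt_durfee (lam : IntPartition) {i : ℕ} (hi : i < lam.durfee) :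
    i < lam.parts i := (lam.lt_durfee_iff i).mp hi

/-- Diagonal hook value. -/
theorem hook_diag (lam : IntPartition) (hsc : lam.IsSelfConjugate) {i : ℕ}
    (hi : i < lam.durfee) : lam.hook i i = 2 * lam.parts i - 2 * i - 1 := by
  have h1 : i < lam.parts i := lam.parts_gt_of_lt_durfee hi
  unfold hook
  rw [hsc]
  omega

/-- Cells in rows/columns both inside the Durfee square, and their hooks. -/
theorem hook_box (lam : IntPartition) (hsc : lam.IsSelfConjugate) {i j : ℕ}
    (hi : i < lam.durfee) (hj : j < lam.durfee) :
    lam.IsCell i j ∧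
      2 * lam.hook i j = (2 * lam.parts i - 2 * i - 1) + (2 * lam.parts j - 2 * j - 1) := by
  have h1 : i < lam.parts i := lam.parts_gt_of_lt_durfee hi
  have h2 : j < lam.parts j := lam.parts_gt_of_lt_durfee hj
  have hcell : j < lam.parts i := by
    rcases le_or_gt i j with h | h
    · exact lt_of_lt_of_le h2 (lam.antitone i j h)
    · omega
  have hcell2 : i < lam.parts j := by
    rcases le_or_gt j i with h | h
    · exact lt_of_lt_of_le h1 (lam.antitone j i h)
    · omega
  refine ⟨hcell, ?_⟩
  unfold hook
  rw [hsc]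
  omega
theorem diag_strict (lam : IntPartition)
    (hd : ∀ i j, i < lam.durfee → j < lam.durfee → i ≠ j → lam.parts i ≠ lam.parts j)
    {i j : ℕ} (hij : i < j) (hj : j < lam.durfee) : lam.parts j < lam.parts i := by
  have h1 := lam.antitone i j (le_of_lt hij)
  have h2 := hd i j (lt_trans hij hj) hj (by omega)
  omega

theorem diag_gap (lam : IntPartition) (hsc : lam.IsSelfConjugate)
    (hd : ∀ i j, i < lam.durfee → j < lam.durfee → i ≠ j → lam.parts i ≠ lam.parts j)
    {i j : ℕ} (hij : i < j) (hj : j < lam.durfee) :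
    lam.hook j j + 4 ≤ lam.hook i i := by
  have hi : i < lam.durfee := lt_trans hij hj
  have h1 : lam.parts j < lam.parts i := lam.diag_strict hd hij hj
  have h2 : j < lam.parts j := lam.parts_gt_of_lt_durfee hj
  rw [lam.hook_diag hsc hi, lam.hook_diag hsc hj]
  omega

theorem diag_odd (lam : IntPartition) (hsc : lam.IsSelfConjugate) {i : ℕ}
    (hi : i < lam.durfee) : lam.hook i i % 2 = 1 := by
  have h1 : i < lam.parts i := lam.parts_gt_of_lt_durfee hi
  rw [lam.hook_diag hsc hi]
  omega

theorem no_sum (lam : IntPartition) (t : ℕ) (hsc : lam.IsSelfConjugate)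
    (hc1 : lam.IsCore t) (hc2 : lam.IsCore (t + 1)) {i j : ℕ}
    (hi : i < lam.durfee) (hj : j < lam.durfee) :
    lam.hook i i + lam.hook j j ≠ 2 * t ∧ lam.hook i i + lam.hook j j ≠ 2 * t + 2 := by
  obtain ⟨hcell, hbox⟩ := lam.hook_box hsc hi hj
  rw [lam.hook_diag hsc hi, lam.hook_diag hsc hj]
  constructor
  · intro h
    have : lam.hook i j = t := by omega
    exact hc1 i j hcell (this ▸ dvd_refl t)
  · intro h
    have : lam.hook i j = t + 1 := by omega
    exact hc2 i j hcell (this ▸ dvd_refl (t + 1))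
theorem conjParts_le_durfee (lam : IntPartition) (hsc : lam.IsSelfConjugate) {j : ℕ}
    (hj : lam.durfee ≤ j) : lam.conjParts j ≤ lam.durfee := by
  rw [hsc]
  exact lam.parts_le_durfee hsc hj

/-- The central counting argument: if the top diagonal hook were ≥ 2t, we
could find forbidden hooks in row 0. -/
theorem hook_zero_le (lam : IntPartition) (t : ℕ) (ht : 1 ≤ t)
    (hsc : lam.IsSelfConjugate)
    (hc1 : lam.IsCore t) (hc2 : lam.IsCore (t + 1))
    (hdist : ∀ i j, i < lam.durfee → j < lam.durfee → i ≠ j → lam.parts i ≠ lam.parts j)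
    (hd0 : 0 < lam.durfee) :
    lam.hook 0 0 ≤ 2 * t - 1 := by
  by_contra hcon
  push_neg at hcon
  set d := lam.durfee with hdd
  set p0 := lam.parts 0 with hp0
  have hp0d : 0 < p0 := lam.parts_gt_of_lt_durfee hd0
  have hh0 : lam.hook 0 0 = 2 * p0 - 1 := by
    have := lam.hook_diag hsc hd0
    omega
  have hp0t : t + 1 ≤ p0 := by omega
  -- the map j ↦ j - conjParts j on [d, p0)
  set φ : ℕ → ℕ := fun j => j - lam.conjParts j with hφ
  have hconj_facts : ∀ j, d ≤ j → j < p0 →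
      1 ≤ lam.conjParts j ∧ lam.conjParts j ≤ d := by
    intro j hdj hjp
    constructor
    · have : 0 < lam.conjParts j := (lam.lt_conjParts_iff 0 j).mpr hjp
      omega
    · exact lam.conjParts_le_durfee hsc hdj
  have hdp0 : d ≤ p0 := by
    by_contra h
    push_neg at h
    have h1 : lam.parts p0 ≤ p0 := by
      rcases Nat.eq_zero_or_pos p0 with h0 | h0
      · omega
      · calc lam.parts p0 ≤ lam.parts 0 := lam.antitone 0 p0 (by omega)
          _ = p0 := rfl
    have := (lam.lt_durfee_iff p0).mp (by omega)
    omega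
  -- φ is strictly monotone on [d, p0)
  have hφmono : ∀ j1 j2, d ≤ j1 → j1 < j2 → j2 < p0 → φ j1 < φ j2 := by
    intro j1 j2 h1 h2 h3
    have hc12 : lam.conjParts j2 ≤ lam.conjParts j1 :=
      lam.conjParts_antitone (by omega)
    have hf1 := hconj_facts j1 h1 (by omega)
    have hf2 := hconj_facts j2 (by omega) h3
    simp only [hφ]
    omega
  -- all φ-values give odd non-diagonal values
  have hφgood : ∀ j, d ≤ j → j < p0 →
      φ j < p0 - 1 ∧ ∀ i, i < d → lam.hook i i ≠ 2 * φ j + 1 := by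
    intro j hdj hjp
    have hf := hconj_facts j hdj hjp
    constructor
    · simp only [hφ]
      omega
    · intro i hi hhook
      have hpi : i < lam.parts i := lam.parts_gt_of_lt_durfee hi
      have hdiag := lam.hook_diag hsc hi
      rcases lt_or_ge i (lam.conjParts j) with hlt | hge
      · have : j < lam.parts i := (lam.lt_conjParts_iff i j).mp hlt
        simp only [hφ] at hhook
        omega
      · have : ¬ (j < lam.parts i) := fun hx => by
          have := (lam.lt_conjParts_iff i j).mpr hx
          omega
        simp only [hφ] at hhook
        omega
  -- hooks in row 0 beyond the Durfee square
  have hhook0 : ∀ j, d ≤ j → j < p0 → lam.hook 0 j = p0 - 1 - φ j := by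
    intro j hdj hjp
    have hf := hconj_facts j hdj hjp
    unfold hook
    simp only [hφ]
    omega
  -- If x < p0 - 1 and 2x+1 is not a diagonal hook, then x is in the image of φ.
  have hmain : ∀ x, x < p0 - 1 → (∀ i, i < d → lam.hook i i ≠ 2 * x + 1) →
      ∃ j, d ≤ j ∧ j < p0 ∧ φ j = x := by
    intro x hx hnd
    by_contra hno
    push_neg at hno
    -- Finset counting
    set O : Finset ℕ := (Finset.range (p0 - 1)).filter
      (fun y => ∀ i, i < d → lam.hook i i ≠ 2 * y + 1) with hO
    set U : Finset ℕ := (Finset.Ico d p0).image φ with hU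
    set D' : Finset ℕ := (Finset.Ico 1 d).image (fun i => (lam.hook i i - 1) / 2) with hD'
    have hUsub : U ⊆ O := by
      intro y hy
      simp only [hU, Finset.mem_image, Finset.mem_Ico] at hy
      obtain ⟨j, ⟨hj1, hj2⟩, rfl⟩ := hy
      have := hφgood j hj1 hj2
      simp only [hO, Finset.mem_filter, Finset.mem_range]
      exact ⟨this.1, this.2⟩
    have hUcard : U.card = p0 - d := by
      rw [hU, Finset.card_image_of_injOn, Nat.card_Ico]
      intro a ha b hb hab
      simp only [Finset.coe_Ico, Set.mem_Ico] at ha hb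
      by_contra hne
      rcases lt_or_gt_of_ne hne with h | h
      · have := hφmono a b ha.1 h hb.2; omega
      · have := hφmono b a hb.1 h ha.2; omega
    have hD'card : D'.card = d - 1 := by
      rw [hD', Finset.card_image_of_injOn, Nat.card_Ico]
      intro a ha b hb hab
      simp only [Finset.coe_Ico, Set.mem_Ico] at ha hb
      have hab' : (lam.hook a a - 1) / 2 = (lam.hook b b - 1) / 2 := hab
      have hha := lam.diag_odd hsc (show a < lam.durfee by omega)
      have hhb := lam.diag_odd hsc (show b < lam.durfee by omega)
      by_contra hne
      rcases lt_or_gt_of_ne hne with h | h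
      · have := lam.diag_gap hsc hdist h (show b < lam.durfee by omega); omega
      · have := lam.diag_gap hsc hdist h (show a < lam.durfee by omega); omega
    have hdisj : Disjoint O D' := by
      rw [Finset.disjoint_right]
      intro y hy hyO
      simp only [hD', Finset.mem_image, Finset.mem_Ico] at hy
      obtain ⟨i, ⟨hi1, hi2⟩, rfl⟩ := hy
      simp only [hO, Finset.mem_filter, Finset.mem_range] at hyO
      have hodd := lam.diag_odd hsc (show i < lam.durfee by omega)
      exact hyO.2 i hi2 (by omega)
    have hD'sub : D' ⊆ Finset.range (p0 - 1) := by
      intro y hy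
      simp only [hD', Finset.mem_image, Finset.mem_Ico] at hy
      obtain ⟨i, ⟨hi1, hi2⟩, rfl⟩ := hy
      have := lam.diag_gap hsc hdist (show 0 < i by omega) (show i < lam.durfee by omega)
      simp only [Finset.mem_range]
      omega
    have hOsub : O ⊆ Finset.range (p0 - 1) := Finset.filter_subset _ _
    have hcard_union : (O ∪ D').card = O.card + (d - 1) := by
      rw [Finset.card_union_of_disjoint hdisj, hD'card]
    have hle : O.card + (d - 1) ≤ p0 - 1 := by
      rw [← hcard_union]
      calc (O ∪ D').card ≤ (Finset.range (p0 - 1)).card :=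
            Finset.card_le_card (Finset.union_subset hOsub hD'sub)
        _ = p0 - 1 := Finset.card_range _
    have hOU : U = O := Finset.eq_of_subset_of_card_le hUsub (by omega)
    have hxO : x ∈ O := by
      simp only [hO, Finset.mem_filter, Finset.mem_range]
      exact ⟨hx, hnd⟩
    rw [← hOU] at hxO
    simp only [hU, Finset.mem_image, Finset.mem_Ico] at hxO
    obtain ⟨j, ⟨hj1, hj2⟩, hj3⟩ := hxO
    exact hno j hj1 hj2 hj3
  -- now use hmain with x₁ = p0 - 1 - t  (hook value t)
  have hstep : ∀ s, t ≤ s → s + 1 ≤ p0 → (lam.hook 0 0 ≠ 2*(p0-1-s)+1) →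
      (¬ (s = t ∨ s = t + 1)) ∨ (∃ i, i < d ∧ lam.hook i i = 2*(p0-1-s)+1) := by
    intro s hs hsp hneq
    by_cases hex : ∃ i, i < d ∧ lam.hook i i = 2*(p0-1-s)+1
    · exact Or.inr hex
    · push_neg at hex
      left
      intro hst
      obtain ⟨j, hj1, hj2, hj3⟩ := hmain (p0 - 1 - s) (by omega)
        (by intro i hi; exact hex i hi)
      have hcell : lam.IsCell 0 j := by
        unfold IsCell; omega
      have hhv : lam.hook 0 j = s := by
        rw [hhook0 j hj1 hj2, hj3]; omega
      rcases hst with rfl | rfl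
      · exact hc1 0 j hcell (hhv ▸ dvd_refl _)
      · exact hc2 0 j hcell (hhv ▸ dvd_refl _)
  -- h0 ≥ 2t, h0 odd so h0 ≥ 2t+1, p0 ≥ t+1
  have hodd0 := lam.diag_odd hsc hd0
  -- case 1 : p0 = t+1, i.e. h0 = 2t+1
  rcases Nat.lt_or_ge p0 (t + 2) with hcase | hcase
  · have hp0e : p0 = t + 1 := by omega
    have h1 := hstep t le_rfl (by omega) (by omega)
    rcases h1 with h | ⟨i, hi, hhi⟩
    · exact h (Or.inl rfl)
    · -- hook i i = 1, and hook 0 0 = 2t+1: sum = 2t+2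
      have := lam.no_sum t hsc hc1 hc2 hi hd0
      rw [lam.hook_diag hsc hi, lam.hook_diag hsc hd0] at this
      have hdiag := lam.hook_diag hsc hi
      omega
  · -- p0 ≥ t+2: both hooks t and t+1 forced as diagonal hooks, gap contradiction
    have h1 := hstep t le_rfl (by omega) (by omega)
    have h2 := hstep (t+1) (by omega) (by omega) (by omega)
    rcases h1 with h | ⟨i1, hi1, hh1⟩
    · exact h (Or.inl rfl)
    rcases h2 with h | ⟨i2, hi2, hh2⟩
    · exact h (Or.inr rfl)
    have hne : i1 ≠ i2 := by
      intro h
      rw [h] at hh1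
      omega
    rcases lt_or_gt_of_ne hne with h | h
    · have := lam.diag_gap hsc hdist h hi2; omega
    · have := lam.diag_gap hsc hdist h hi1; omega
theorem size_eq_sum_diag (lam : IntPartition) (hsc : lam.IsSelfConjugate) :
    lam.size = ∑ i ∈ Finset.range lam.durfee, (2 * lam.parts i - 2 * i - 1) := by
  classical
  obtain ⟨N₀, hN₀⟩ := lam.finite
  set d := lam.durfee with hdd
  set N := N₀ + lam.parts 0 + 1 with hN
  have hvanish : ∀ i, N ≤ i → lam.parts i = 0 := fun i hi => hN₀ i (by omega)
  have hbound : ∀ i, lam.parts i ≤ N := fun i => by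
    have := lam.antitone 0 i (Nat.zero_le i)
    omega
  have hdN : d ≤ N := by
    rcases Nat.eq_zero_or_pos d with h | h
    · omega
    · have h1 : d - 1 < lam.parts (d - 1) := lam.parts_gt_of_lt_durfee (by omega)
      have h2 := lam.antitone 0 (d - 1) (Nat.zero_le _)
      omega
  have hple : ∀ i, d ≤ i → lam.parts i ≤ i := by
    intro i hi
    by_contra h
    push_neg at h
    have := (lam.lt_durfee_iff i).mpr h
    omega
  -- size as finite sum
  have hsize : lam.size = ∑ i ∈ Finset.range N, lam.parts i := by
    apply finsum_eq_sum_of_support_subset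
    intro i hi
    simp only [Function.mem_support] at hi
    simp only [Finset.coe_range, Set.mem_Iio]
    by_contra h
    exact hi (hvanish i (by omega))
  -- split each part
  have hsplit : ∑ i ∈ Finset.range N, lam.parts i =
      (∑ i ∈ Finset.range N, min i (lam.parts i)) +
      (∑ i ∈ Finset.range N, (lam.parts i - i)) := by
    rw [← Finset.sum_add_distrib]
    apply Finset.sum_congr rfl
    intro i _
    omega
  -- upper-triangle part
  have htri : ∑ i ∈ Finset.range N, (lam.parts i - i) =
      ∑ i ∈ Finset.range d, (lam.parts i - i) := by
    symm
    apply Finset.sum_subset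
    · intro i hi
      simp only [Finset.mem_range] at *
      omega
    · intro i _ hi
      simp only [Finset.mem_range] at hi
      have := hple i (by omega)
      omega
  -- lower-triangle part via double counting
  have hlow : ∑ i ∈ Finset.range N, min i (lam.parts i) =
      ∑ j ∈ Finset.range N, (lam.parts j - (j + 1)) := by
    have h1 : ∀ i ∈ Finset.range N, min i (lam.parts i) =
        ∑ j ∈ Finset.range N, (if j < i ∧ j < lam.parts i then 1 else 0) := by
      intro i hi
      simp only [Finset.mem_range] at hi
      rw [← Finset.card_filter]
      have : (Finset.range N).filter (fun j => j < i ∧ j < lam.parts i) =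
          Finset.range (min i (lam.parts i)) := by
        ext j
        simp only [Finset.mem_filter, Finset.mem_range]
        omega
      rw [this, Finset.card_range]
    rw [Finset.sum_congr rfl h1, Finset.sum_comm]
    apply Finset.sum_congr rfl
    intro j hj
    simp only [Finset.mem_range] at hj
    rw [← Finset.card_filter]
    have hconjN : lam.conjParts j ≤ N := by
      rw [hsc]; exact hbound j
    have : (Finset.range N).filter (fun i => j < i ∧ j < lam.parts i) =
        Finset.Ico (j + 1) (lam.conjParts j) := by
      ext i
      simp only [Finset.mem_filter, Finset.mem_range, Finset.mem_Ico]
      constructor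
      · rintro ⟨h1', h2', h3'⟩
        exact ⟨by omega, (lam.lt_conjParts_iff i j).mpr h3'⟩
      · rintro ⟨h1', h2'⟩
        exact ⟨by omega, by omega, (lam.lt_conjParts_iff i j).mp h2'⟩
    rw [this, Nat.card_Ico, hsc]
  have hlow2 : ∑ j ∈ Finset.range N, (lam.parts j - (j + 1)) =
      ∑ j ∈ Finset.range d, (lam.parts j - (j + 1)) := by
    symm
    apply Finset.sum_subset
    · intro i hi
      simp only [Finset.mem_range] at *
      omega
    · intro j _ hj
      simp only [Finset.mem_range] at hj
      have := hple j (by omega)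
      omega
  rw [hsize, hsplit, htri, hlow, hlow2, ← Finset.sum_add_distrib]
  apply Finset.sum_congr rfl
  intro i hi
  simp only [Finset.mem_range] at hi
  have := lam.parts_gt_of_lt_durfee (show i < lam.durfee from hi)
  omega
end IntPartition
theorem natCard_Iio (k : ℕ) : Nat.card (Set.Iio k) = k := by
  rw [Nat.card_eq_card_toFinset]
  simp

/-- A downward-closed filter of `range n` is an initial segment. -/
theorem downclosed_eq_range (n : ℕ) (q : ℕ → Prop) [DecidablePred q]
    (hq : ∀ a b, a ≤ b → b < n → q b → q a) :
    (Finset.range n).filter q = Finset.range (((Finset.range n).filter q).card) := by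
  set F := (Finset.range n).filter q with hF
  have hnot : n ∉ F := by simp [hF]
  have hne : {m | m ∉ F}.Nonempty := ⟨n, hnot⟩
  set K := sInf {m | m ∉ F} with hK
  have hKmem : K ∉ F := Nat.sInf_mem hne
  have hFr : F = Finset.range K := by
    ext m
    simp only [Finset.mem_range]
    constructor
    · intro hm
      by_contra h
      push_neg at h
      apply hKmem
      simp only [hF, Finset.mem_filter, Finset.mem_range] at hm ⊢
      exact ⟨by omega, hq K m h hm.1 hm.2⟩
    · intro hm
      by_contra h
      have : K ≤ m := Nat.sInf_le (show m ∈ {m | m ∉ F} from h)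
      omega
  rw [hFr, Finset.card_range]

namespace IntPartition

section Build

variable (d : ℕ) (μ : ℕ → ℕ)

/-- Parts of the self-conjugate partition with Durfee square `d` and
top `d` parts given by `μ`. -/
def bparts (i : ℕ) : ℕ :=
  if i < d then μ i else ((Finset.range d).filter (fun m => i < μ m)).card

variable {d μ}
variable (hd : 0 < d) (hstrict : ∀ i j, i < j → j < d → μ j < μ i)
  (hge : ∀ i, i < d → d ≤ μ i)

include hstrict in
theorem mu_anti : ∀ i j, i ≤ j → j < d → μ j ≤ μ i := by
  intro i j hij hj
  rcases eq_or_lt_of_le hij with rfl | h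
  · exact le_rfl
  · exact le_of_lt (hstrict i j h hj)

include hstrict hge in
theorem bparts_antitone : ∀ i j, i ≤ j → bparts d μ j ≤ bparts d μ i := by
  intro i j hij
  unfold bparts
  split_ifs with h1 h2 h2
  · exact mu_anti hstrict i j hij h1
  · omega
  · calc ((Finset.range d).filter (fun m => j < μ m)).card ≤ (Finset.range d).card :=
        Finset.card_filter_le _ _
      _ = d := Finset.card_range d
      _ ≤ μ i := hge i h2
  · apply Finset.card_le_card
    intro m hm
    simp only [Finset.mem_filter, Finset.mem_range] at hm ⊢
    exact ⟨hm.1, by omega⟩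

include hd hstrict in
theorem bparts_finite : ∀ i, μ 0 + d ≤ i → bparts d μ i = 0 := by
  intro i hi
  have h0 : ∀ m, m < d → μ m ≤ μ 0 := fun m hm => mu_anti hstrict 0 m (Nat.zero_le m) hm
  unfold bparts
  rw [if_neg (by omega)]
  convert Finset.card_empty
  rw [Finset.filter_eq_empty_iff]
  intro m hm
  simp only [Finset.mem_range] at hm
  have := h0 m hm
  omega

variable (d μ)

/-- The constructed partition. -/
def bpartition : IntPartition :=
  ⟨bparts d μ, bparts_antitone hstrict hge, ⟨μ 0 + d, bparts_finite hd hstrict⟩⟩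

variable {d μ}

theorem bparts_card_le : ∀ i, d ≤ i → bparts d μ i ≤ d := by
  intro i hi
  unfold bparts
  rw [if_neg (by omega)]
  calc ((Finset.range d).filter (fun m => i < μ m)).card ≤ (Finset.range d).card :=
      Finset.card_filter_le _ _
    _ = d := Finset.card_range d

include hd hstrict hge in
theorem bpartition_selfconj :
    (bpartition d μ hd hstrict hge).IsSelfConjugate := by
  intro x
  set lam := bpartition d μ hd hstrict hge with hlam
  have hparts : lam.parts = bparts d μ := rfl
  have hset : {i : ℕ | x < lam.parts i} = Set.Iio (lam.parts x) := by
    ext i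
    simp only [Set.mem_setOf_eq, Set.mem_Iio]
    rcases Nat.lt_or_ge x d with hx | hx
    · have hpx : lam.parts x = μ x := by simp [hparts, bparts, hx]
      rw [hpx]
      constructor
      · intro h
        by_contra hcon
        push_neg at hcon
        have hixd : d ≤ i := le_trans (hge x hx) hcon
        have : lam.parts i ≤ x := by
          simp only [hparts, bparts, if_neg (by omega : ¬ i < d)]
          calc ((Finset.range d).filter (fun m => i < μ m)).card
              ≤ ((Finset.range d).filter (fun m => m < x)).card := by
                apply Finset.card_le_card
                intro m hm
                simp only [Finset.mem_filter, Finset.mem_range] at hm ⊢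
                refine ⟨hm.1, ?_⟩
                by_contra hmx
                push_neg at hmx
                have := mu_anti hstrict x m hmx hm.1
                omega
            _ ≤ (Finset.range x).card := by
                apply Finset.card_le_card
                intro m hm
                simp only [Finset.mem_filter, Finset.mem_range] at hm ⊢
                exact hm.2
            _ = x := Finset.card_range x
        omega
      · intro h
        rcases Nat.lt_or_ge i d with hid | hid
        · have hpi : lam.parts i = μ i := by simp [hparts, bparts, hid]
          have := hge i hid
          omega
        · have hpi : lam.parts i = ((Finset.range d).filter (fun m => i < μ m)).card := by
            simp [hparts, bparts, if_neg (by omega : ¬ i < d)]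
          rw [hpi]
          have hsub : Finset.range (x + 1) ⊆ (Finset.range d).filter (fun m => i < μ m) := by
            intro m hm
            simp only [Finset.mem_range] at hm
            simp only [Finset.mem_filter, Finset.mem_range]
            have hmd : m < d := by omega
            refine ⟨hmd, ?_⟩
            have := mu_anti hstrict m x (by omega) hx
            omega
          have := Finset.card_le_card hsub
          rw [Finset.card_range] at this
          omega
    · have hpx : lam.parts x = ((Finset.range d).filter (fun m => x < μ m)).card := by
        simp [hparts, bparts, if_neg (by omega : ¬ x < d)]
      have hdc := downclosed_eq_range d (fun m => x < μ m) (by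
        intro a b hab hb hq
        have := mu_anti hstrict a b hab hb
        omega)
      constructor
      · intro h
        rcases Nat.lt_or_ge i d with hid | hid
        · have hpi : lam.parts i = μ i := by simp [hparts, bparts, hid]
          have : i ∈ (Finset.range d).filter (fun m => x < μ m) := by
            simp only [Finset.mem_filter, Finset.mem_range]
            exact ⟨hid, by omega⟩
          rw [hdc, Finset.mem_range] at this
          omega
        · have := bparts_card_le (μ := μ) i hid
          have hxd : d ≤ x := hx
          have : lam.parts i ≤ d := this
          omega
      · intro h
        have hiP : i < ((Finset.range d).filter (fun m => x < μ m)).card := by omega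
        have hid : i < d := by
          have : ((Finset.range d).filter (fun m => x < μ m)).card ≤ d := by
            calc _ ≤ (Finset.range d).card := Finset.card_filter_le _ _
              _ = d := Finset.card_range d
          omega
        have : i ∈ (Finset.range d).filter (fun m => x < μ m) := by
          rw [hdc, Finset.mem_range]
          exact hiP
        simp only [Finset.mem_filter, Finset.mem_range] at this
        have hpi : lam.parts i = μ i := by simp [hparts, bparts, hid]
        omega
  show lam.conjParts x = lam.parts x
  unfold conjParts
  rw [hset, natCard_Iio]

include hd hstrict hge in
theorem bpartition_durfee : (bpartition d μ hd hstrict hge).durfee = d := by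
  set lam := bpartition d μ hd hstrict hge with hlam
  have hset : {i : ℕ | i < lam.parts i} = Set.Iio d := by
    ext i
    simp only [Set.mem_setOf_eq, Set.mem_Iio]
    constructor
    · intro h
      by_contra hid
      push_neg at hid
      have := bparts_card_le (μ := μ) i hid
      have : lam.parts i ≤ d := this
      omega
    · intro h
      have hparts : lam.parts = bparts d μ := rfl
      have hpi : lam.parts i = μ i := by simp [hparts, bparts, h]
      have := hge i h
      omega
  show lam.durfee = d
  unfold durfee
  rw [hset, natCard_Iio]

include hd hstrict hge in
theorem bpartition_hook_facts (t : ℕ) (ht : 1 ≤ t)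
    (hmax : ∀ i, i < d → μ i ≤ t)
    (hsum : ∀ i j, i < d → j < d →
      (μ i - i) + (μ j - j) ≠ t + 1 ∧ (μ i - i) + (μ j - j) ≠ t + 2) :
    ∀ i j, (bpartition d μ hd hstrict hge).IsCell i j →
      1 ≤ (bpartition d μ hd hstrict hge).hook i j ∧
      (bpartition d μ hd hstrict hge).hook i j ≤ 2 * t - 1 ∧
      (bpartition d μ hd hstrict hge).hook i j ≠ t ∧
      (bpartition d μ hd hstrict hge).hook i j ≠ t + 1 := by
  intro i j hcell
  set lam := bpartition d μ hd hstrict hge with hlam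
  have hsc : lam.IsSelfConjugate := bpartition_selfconj hd hstrict hge
  have hdur : lam.durfee = d := bpartition_durfee hd hstrict hge
  have hparts : lam.parts = bparts d μ := rfl
  have hpmu : ∀ m, m < d → lam.parts m = μ m := by
    intro m hm
    simp [hparts, bparts, hm]
  have hcell' : j < lam.parts i := hcell
  rcases Nat.lt_or_ge i d with hid | hid
  · rcases Nat.lt_or_ge j d with hjd | hjd
    · -- both inside the Durfee square
      obtain ⟨_, hbox⟩ := lam.hook_box hsc (by omega : i < lam.durfee)
        (by omega : j < lam.durfee)
      rw [hpmu i hid, hpmu j hjd] at hbox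
      have h1 := hge i hid
      have h2 := hge j hjd
      have h3 := hmax i hid
      have h4 := hmax j hjd
      have h5 := hsum i j hid hjd
      omega
    · -- right of the Durfee square
      have hconj : lam.conjParts j = lam.parts j := hsc j
      have hcle : lam.parts j ≤ d := bparts_card_le (μ := μ) j hjd
      have hicj : i < lam.conjParts j := (lam.lt_conjParts_iff i j).mpr hcell'
      have hmui : j < μ i := by rw [hpmu i hid] at hcell'; exact hcell'
      have h1 := hmax i hid
      have hhk : lam.hook i j = (lam.parts i - j) + (lam.conjParts j - i) - 1 := rfl
      rw [hpmu i hid] at hhk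
      omega
  · rcases Nat.lt_or_ge j d with hjd | hjd
    · -- below the Durfee square
      have hconj : lam.conjParts j = lam.parts j := hsc j
      have hple : lam.parts i ≤ d := bparts_card_le (μ := μ) i hid
      have hicj : i < lam.conjParts j := (lam.lt_conjParts_iff i j).mpr hcell'
      have hmuj : i < μ j := by rw [hconj, hpmu j hjd] at hicj; exact hicj
      have h1 := hmax j hjd
      have hhk : lam.hook i j = (lam.parts i - j) + (lam.conjParts j - i) - 1 := rfl
      rw [hconj, hpmu j hjd] at hhk
      omega
    · -- impossible cell
      have hple : lam.parts i ≤ d := bparts_card_le (μ := μ) i hid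
      omega

include hd hstrict hge in
theorem bpartition_inDS (t : ℕ) (ht : 1 ≤ t)
    (hmax : ∀ i, i < d → μ i ≤ t)
    (hsum : ∀ i j, i < d → j < d →
      (μ i - i) + (μ j - j) ≠ t + 1 ∧ (μ i - i) + (μ j - j) ≠ t + 2) :
    (bpartition d μ hd hstrict hge).InDS t ∧
      ((bpartition d μ hd hstrict hge).size : ℤ) =
        ∑ i ∈ Finset.range d, (2 * (μ i : ℤ) - 2 * i - 1) := by
  set lam := bpartition d μ hd hstrict hge with hlam
  have hsc : lam.IsSelfConjugate := bpartition_selfconj hd hstrict hge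
  have hdur : lam.durfee = d := bpartition_durfee hd hstrict hge
  have hparts : lam.parts = bparts d μ := rfl
  have hpmu : ∀ m, m < d → lam.parts m = μ m := by
    intro m hm
    simp [hparts, bparts, hm]
  have hfacts := bpartition_hook_facts hd hstrict hge t ht hmax hsum
  refine ⟨⟨hsc, ?_, ?_, ?_⟩, ?_⟩
  · intro i j hcell hdvd
    obtain ⟨h1, h2, h3, h4⟩ := hfacts i j hcell
    rw [← hlam] at h1 h2 h3 h4
    obtain ⟨k, hk⟩ := hdvd
    rcases Nat.lt_or_ge k 2 with hk2 | hk2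
    · interval_cases k <;> omega
    · have : t * 2 ≤ t * k := Nat.mul_le_mul_left _ hk2
      omega
  · intro i j hcell hdvd
    obtain ⟨h1, h2, h3, h4⟩ := hfacts i j hcell
    rw [← hlam] at h1 h2 h3 h4
    obtain ⟨k, hk⟩ := hdvd
    rcases Nat.lt_or_ge k 2 with hk2 | hk2
    · interval_cases k <;> omega
    · have : (t + 1) * 2 ≤ (t + 1) * k := Nat.mul_le_mul_left _ hk2
      omega
  · intro i j hi hj hij
    rw [hdur] at hi hj
    rw [hpmu i hi, hpmu j hj]
    rcases lt_or_gt_of_ne hij with h | h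
    · exact (hstrict i j h hj).ne'
    · exact (hstrict j i h hi).ne
  · rw [lam.size_eq_sum_diag hsc, hdur]
    rw [Nat.cast_sum]
    apply Finset.sum_congr rfl
    intro i hi
    simp only [Finset.mem_range] at hi
    rw [hpmu i hi]
    have h1 := hge i hi
    omega

end Build
end IntPartition


set_option maxHeartbeats 1000000
namespace DSAux

/-- value of a position in the folded problem -/
def vv (t c : ℕ) : ℤ := if c % 2 = 1 then (c : ℤ) else 2 * (t : ℤ) + 1 - c

/-- value of k bottom evens packed with gap 4 -/
def Kq (t k : ℕ) : ℤ := (k : ℤ) * (2 * (t : ℤ) + 1 - 2 * (k : ℤ))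

/-- closed form of the value of a 3-step descending chain of length m anchored at n -/
def CF (t n m : ℕ) : ℤ :=
  if n % 2 = 1 then
    (if m % 2 = 0 then ((m / 2 : ℕ) : ℤ) * (2 * (t : ℤ) + 4)
     else ((m / 2 : ℕ) : ℤ) * (2 * (t : ℤ) - 2) + (n : ℤ))
  else
    (if m % 2 = 0 then ((m / 2 : ℕ) : ℤ) * (2 * (t : ℤ) - 2)
     else ((m / 2 : ℕ) : ℤ) * (2 * (t : ℤ) + 4) + (2 * (t : ℤ) + 1 - (n : ℤ)))

/-- the DP super-solution -/
def G (t n : ℕ) : ℤ :=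
  let a := (2 * t + 1) / 12
  if n = 0 then 0
  else if n = 1 then 1
  else if n = 4 then 2 * (t : ℤ) - 1
  else if n ≤ 4 * a + 6 then
    if n % 4 = 3 then Kq t ((n + 1) / 4)
    else if n % 4 = 0 then Kq t ((n - 8) / 4) + CF t n 3
    else if n % 4 = 1 then Kq t ((n - 5) / 4) + CF t n 2
    else Kq t ((n - 2) / 4) + CF t n 1
  else
    let r := (t - 1 - n) % 3
    let k := if r = 0 then a - 1 else if r = 1 then a + 1 else a
    Kq t k + CF t n ((n - 4 * k - 1) / 3 + 1)

section CFlemmas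

variable (t : ℕ)

lemma CF_oe (n s : ℕ) (hn : n % 2 = 1) : CF t n (2 * s) = (s : ℤ) * (2 * t + 4) := by
  unfold CF
  rw [if_pos hn, if_pos (by omega)]
  congr 2
  omega

lemma CF_oo (n s : ℕ) (hn : n % 2 = 1) :
    CF t n (2 * s + 1) = (s : ℤ) * (2 * t - 2) + n := by
  unfold CF
  rw [if_pos hn, if_neg (by omega)]
  congr 3
  omega

lemma CF_ee (n s : ℕ) (hn : n % 2 = 0) : CF t n (2 * s) = (s : ℤ) * (2 * t - 2) := by
  unfold CF
  rw [if_neg (by omega), if_pos (by omega)]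
  congr 2
  omega

lemma CF_eo (n s : ℕ) (hn : n % 2 = 0) :
    CF t n (2 * s + 1) = (s : ℤ) * (2 * t + 4) + (2 * (t : ℤ) + 1 - n) := by
  unfold CF
  rw [if_neg (by omega), if_neg (by omega)]
  congr 3
  omega

lemma CF_step (n m : ℕ) (hn : 3 ≤ n) (hm : 1 ≤ m) :
    CF t n m = vv t n + CF t (n - 3) (m - 1) := by
  have hn3 : ((n - 3 : ℕ) : ℤ) = (n : ℤ) - 3 := by omega
  rcases Nat.even_or_odd n with hne | hno
  · -- n even
    have hn2 : n % 2 = 0 := Nat.even_iff.mp hne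
    have hn32 : (n - 3) % 2 = 1 := by omega
    have hvv : vv t n = 2 * (t : ℤ) + 1 - n := by unfold vv; rw [if_neg (by omega)]
    rcases Nat.even_or_odd m with hme | hmo
    · obtain ⟨s, hs⟩ := hme
      have hs' : m = 2 * s := by omega
      have hs1 : 1 ≤ s := by omega
      rw [hs']
      have hm1 : 2 * s - 1 = 2 * (s - 1) + 1 := by omega
      rw [hm1, CF_ee t n s hn2, CF_oo t (n-3) (s-1) hn32, hvv]
      have : ((s - 1 : ℕ) : ℤ) = (s : ℤ) - 1 := by omega
      rw [this, hn3]
      ring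
    · obtain ⟨s, hs⟩ := hmo
      rw [hs]
      have hm1 : 2 * s + 1 - 1 = 2 * s := by omega
      rw [hm1, CF_eo t n s hn2, CF_oe t (n-3) s hn32, hvv]
      ring
  · have hn2 : n % 2 = 1 := Nat.odd_iff.mp hno
    have hn32 : (n - 3) % 2 = 0 := by omega
    have hvv : vv t n = (n : ℤ) := by unfold vv; rw [if_pos hn2]
    rcases Nat.even_or_odd m with hme | hmo
    · obtain ⟨s, hs⟩ := hme
      have hs' : m = 2 * s := by omega
      have hs1 : 1 ≤ s := by omega
      rw [hs']
      have hm1 : 2 * s - 1 = 2 * (s - 1) + 1 := by omega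
      rw [hm1, CF_oe t n s hn2, CF_eo t (n-3) (s-1) hn32, hvv]
      have : ((s - 1 : ℕ) : ℤ) = (s : ℤ) - 1 := by omega
      rw [this, hn3]
      ring
    · obtain ⟨s, hs⟩ := hmo
      rw [hs]
      have hm1 : 2 * s + 1 - 1 = 2 * s := by omega
      rw [hm1, CF_oo t n s hn2, CF_ee t (n-3) s hn32, hvv]
      ring

end CFlemmas

section Glemmas

variable {t a c : ℕ} (ht : 6 ≤ t) (ha : a = (2 * t + 1) / 12) (hc : 3 * c + 4 * a = t + 1)

lemma G_zero : G t 0 = 0 := by simp [G]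

lemma G_one : G t 1 = 1 := by norm_num [G]

lemma G_four : G t 4 = 2 * (t : ℤ) - 1 := by norm_num [G]

include ha in
lemma G_b3 (u : ℕ) (h : 4 * u + 3 ≤ 4 * a + 6) : G t (4 * u + 3) = Kq t (u + 1) := by
  simp only [G]
  rw [← ha]
  rw [if_neg (by omega), if_neg (by omega), if_neg (by omega), if_pos (by omega),
    if_pos (by omega)]
  congr 1
  omega

include ha in
lemma G_b0 (u : ℕ) (h2 : 2 ≤ u) (h : 4 * u ≤ 4 * a + 6) :
    G t (4 * u) = Kq t (u - 2) + CF t (4 * u) 3 := by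
  simp only [G]
  rw [← ha]
  rw [if_neg (by omega), if_neg (by omega), if_neg (by omega), if_pos (by omega),
    if_neg (by omega), if_pos (by omega)]
  congr 2
  omega

include ha in
lemma G_b1 (u : ℕ) (h1 : 1 ≤ u) (h : 4 * u + 1 ≤ 4 * a + 6) :
    G t (4 * u + 1) = Kq t (u - 1) + CF t (4 * u + 1) 2 := by
  simp only [G]
  rw [← ha]
  rw [if_neg (by omega), if_neg (by omega), if_neg (by omega), if_pos (by omega),
    if_neg (by omega), if_neg (by omega), if_pos (by omega)]
  congr 2
  omega

include ha in
lemma G_b2 (u : ℕ) (h : 4 * u + 2 ≤ 4 * a + 6) :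
    G t (4 * u + 2) = Kq t u + CF t (4 * u + 2) 1 := by
  simp only [G]
  rw [← ha]
  rw [if_neg (by omega), if_neg (by omega), if_neg (by omega), if_pos (by omega),
    if_neg (by omega), if_neg (by omega), if_neg (by omega)]
  congr 2
  omega

include ha hc in
lemma G_t0 (n f : ℕ) (he : n + 3 * f + 1 = t) (hn : 4 * a + 7 ≤ n) :
    G t n = Kq t (a - 1) + CF t n (c - f + 1) := by
  simp only [G]
  rw [← ha]
  rw [if_neg (by omega), if_neg (by omega), if_neg (by omega), if_neg (by omega),
    if_pos (by omega)]
  congr 2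
  omega

include ha hc in
lemma G_t1 (n f : ℕ) (he : n + 3 * f + 2 = t) (hn : 4 * a + 7 ≤ n) :
    G t n = Kq t (a + 1) + CF t n (c - f - 2) := by
  simp only [G]
  rw [← ha]
  rw [if_neg (by omega), if_neg (by omega), if_neg (by omega), if_neg (by omega),
    if_neg (by omega), if_pos (by omega)]
  congr 2
  omega

include ha hc in
lemma G_t2 (n f : ℕ) (he : n + 3 * f + 3 = t) (hn : 4 * a + 7 ≤ n) :
    G t n = Kq t a + CF t n (c - f - 1) := by
  simp only [G]
  rw [← ha]
  rw [if_neg (by omega), if_neg (by omega), if_neg (by omega), if_neg (by omega),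
    if_neg (by omega), if_neg (by omega)]
  congr 2
  omega

end Glemmas
section Gmain

variable {t a c : ℕ} (ht : 6 ≤ t) (ha : a = (2 * t + 1) / 12) (hc : 3 * c + 4 * a = t + 1)

include ht ha hc in
lemma G_mono {n : ℕ} (hn1 : 1 ≤ n) (hn2 : n + 1 ≤ t) : G t (n - 1) ≤ G t n := by
  have hb1 : 12 * a ≤ 2 * t + 1 := by omega
  have hb2 : 2 * t + 1 ≤ 12 * a + 11 := by omega
  have ha1 : 1 ≤ a := by omega
  have hTl : (6 : ℤ) ≤ (t : ℤ) := by exact_mod_cast ht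
  by_cases htop : 4 * a + 7 ≤ n
  · -- top region
    have hcf : 3 ≤ c := by omega
    obtain ⟨f, hf⟩ : ∃ f, t - 1 - n = 3 * f + (t - 1 - n) % 3 :=
      ⟨(t - 1 - n) / 3, by omega⟩
    rcases (show (t-1-n) % 3 = 0 ∨ (t-1-n) % 3 = 1 ∨ (t-1-n) % 3 = 2 by omega) with h|h|h
    · -- n in class 0
      have he : n + 3 * f + 1 = t := by omega
      rw [G_t0 ha hc n f he htop]
      by_cases hbd : n = 4 * a + 7
      · -- boundary against the bottom region
        have hfc : f = c - 3 := by omega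
        have hm4 : c - f + 1 = 2 * 2 := by omega
        have hnodd : n % 2 = 1 := by omega
        rw [hm4, CF_oe t n 2 hnodd]
        have hn1e : n - 1 = 4 * (a + 1) + 2 := by omega
        rw [hn1e, G_b2 ha (a+1) (by omega), CF_eo t (4*(a+1)+2) 0 (by omega)]
        unfold Kq
        have e1 : ((a - 1 : ℕ) : ℤ) = (a : ℤ) - 1 := by omega
        have e2 : ((4*(a+1)+2 : ℕ) : ℤ) = 4 * (a:ℤ) + 6 := by push_cast; ring
        rw [e1, e2]
        push_cast
        have hb2' : 2 * (t:ℤ) + 1 ≤ 12 * (a:ℤ) + 11 := by exact_mod_cast hb2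
        linarith
      · -- interior: n-1 in class 1 with the same f
        have htop' : 4 * a + 7 ≤ n - 1 := by omega
        have he' : (n - 1) + 3 * f + 2 = t := by omega
        rw [G_t1 ha hc (n-1) f he' htop']
        have hfb : f + 4 ≤ c := by omega
        have hncast : (4*(a:ℤ)+8) ≤ (n:ℤ) := by exact_mod_cast (show 4*a+8 ≤ n by omega)
        have htcast : (n : ℤ) ≤ (t:ℤ) - 1 := by
          have : n ≤ t - 1 := by omega
          omega
        have hb2' : 2 * (t:ℤ) + 1 ≤ 12 * (a:ℤ) + 11 := by exact_mod_cast hb2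
        have e1 : ((a - 1 : ℕ) : ℤ) = (a : ℤ) - 1 := by omega
        rcases (show n % 2 = 1 ∨ n % 2 = 0 by omega) with hpar | hpar
        · obtain ⟨s, hs⟩ : ∃ s, c - f + 1 = 2 * s := ⟨(c-f+1)/2, by omega⟩
          have hs3 : 3 ≤ s := by omega
          have hs' : c - f - 2 = 2 * (s - 2) + 1 := by omega
          rw [hs, hs', CF_oe t n s hpar, CF_eo t (n-1) (s-2) (by omega)]
          unfold Kq
          rw [e1]
          have e3 : ((s - 2 : ℕ) : ℤ) = (s : ℤ) - 2 := by omega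
          rw [e3]
          push_cast
          have en1 : ((n - 1 : ℕ) : ℤ) = (n : ℤ) - 1 := by omega
          rw [en1]
          linarith
        · obtain ⟨s, hs⟩ : ∃ s, c - f + 1 = 2 * s + 1 := ⟨(c-f)/2, by omega⟩
          have hs3 : 2 ≤ s := by omega
          have hs' : c - f - 2 = 2 * (s - 1) := by omega
          rw [hs, hs', CF_eo t n s hpar, CF_oe t (n-1) (s-1) (by omega)]
          unfold Kq
          rw [e1]
          have e3 : ((s - 1 : ℕ) : ℤ) = (s : ℤ) - 1 := by omega
          rw [e3]
          push_cast
          linarith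
    · -- n in class 1, n-1 in class 2 with same f
      have he : n + 3 * f + 2 = t := by omega
      have hne : n ≠ 4 * a + 7 := by omega
      have htop' : 4 * a + 7 ≤ n - 1 := by omega
      have he' : (n - 1) + 3 * f + 3 = t := by omega
      rw [G_t1 ha hc n f he htop, G_t2 ha hc (n-1) f he' htop']
      have hfb : f + 4 ≤ c := by omega
      have hncast : (4*(a:ℤ)+8) ≤ (n:ℤ) := by exact_mod_cast (show 4*a+8 ≤ n by omega)
      have htcast : (n : ℤ) ≤ (t:ℤ) - 1 := by
        have : n ≤ t - 1 := by omega
        omega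
      have htreg : 4 * a + 8 ≤ t := by omega
      have htregc : (4*(a:ℤ)+8) ≤ (t:ℤ) := by exact_mod_cast htreg
      rcases (show n % 2 = 1 ∨ n % 2 = 0 by omega) with hpar | hpar
      · obtain ⟨s, hs⟩ : ∃ s, c - f - 2 = 2 * s := ⟨(c-f-2)/2, by omega⟩
        have hs' : c - f - 1 = 2 * s + 1 := by omega
        rw [hs, hs', CF_oe t n s hpar, CF_eo t (n-1) s (by omega)]
        unfold Kq
        push_cast
        have en1 : ((n - 1 : ℕ) : ℤ) = (n : ℤ) - 1 := by omega
        rw [en1]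
        linarith
      · obtain ⟨s, hs⟩ : ∃ s, c - f - 2 = 2 * s + 1 := ⟨(c-f-3)/2, by omega⟩
        have hs' : c - f - 1 = 2 * (s + 1) := by omega
        rw [hs, hs', CF_eo t n s hpar, CF_oe t (n-1) (s+1) (by omega)]
        unfold Kq
        push_cast
        linarith
    · -- n in class 2, n-1 in class 0 with f+1
      have he : n + 3 * f + 3 = t := by omega
      have hne : n ≠ 4 * a + 7 := by omega
      have htop' : 4 * a + 7 ≤ n - 1 := by omega
      have he' : (n - 1) + 3 * (f + 1) + 1 = t := by omega
      rw [G_t2 ha hc n f he htop, G_t0 ha hc (n-1) (f+1) he' htop']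
      have hfb : f + 4 ≤ c := by omega
      have hncast : (4*(a:ℤ)+8) ≤ (n:ℤ) := by exact_mod_cast (show 4*a+8 ≤ n by omega)
      have htcast : (n : ℤ) ≤ (t:ℤ) - 1 := by
        have : n ≤ t - 1 := by omega
        omega
      have e1 : ((a - 1 : ℕ) : ℤ) = (a : ℤ) - 1 := by omega
      rcases (show n % 2 = 1 ∨ n % 2 = 0 by omega) with hpar | hpar
      · obtain ⟨s, hs⟩ : ∃ s, c - f - 1 = 2 * s := ⟨(c-f-1)/2, by omega⟩
        have hs' : c - (f + 1) + 1 = 2 * s + 1 := by omega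
        rw [hs, hs', CF_oe t n s hpar, CF_eo t (n-1) s (by omega)]
        unfold Kq
        rw [e1]
        push_cast
        have en1 : ((n - 1 : ℕ) : ℤ) = (n : ℤ) - 1 := by omega
        rw [en1]
        linarith
      · obtain ⟨s, hs⟩ : ∃ s, c - f - 1 = 2 * s + 1 := ⟨(c-f-2)/2, by omega⟩
        have hs' : c - (f + 1) + 1 = 2 * (s + 1) := by omega
        rw [hs, hs', CF_eo t n s hpar, CF_oe t (n-1) (s+1) (by omega)]
        unfold Kq
        rw [e1]
        push_cast
        have hacast : 4*(a:ℤ) + 1 ≤ (t:ℤ) := by exact_mod_cast (show 4*a+1 ≤ t by omega)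
        linarith
  · -- bottom region
    push_neg at htop
    rcases (show n ≤ 8 ∨ 9 ≤ n by omega) with hsmall | hbig
    · interval_cases n
      · rw [G_zero, G_one]; norm_num
      · rw [G_one, (show (2:ℕ) = 4*0+2 by norm_num), G_b2 ha 0 (by omega),
          CF_eo t (4*0+2) 0 (by omega)]
        unfold Kq
        push_cast
        linarith
      · rw [(show (3:ℕ)-1 = 4*0+2 by norm_num), (show (3:ℕ) = 4*0+3 by norm_num),
          G_b2 ha 0 (by omega), G_b3 ha 0 (by omega), CF_eo t (4*0+2) 0 (by omega)]
        unfold Kq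
        push_cast
        linarith
      · rw [(show (4:ℕ)-1 = 4*0+3 by norm_num), G_b3 ha 0 (by omega), G_four]
        unfold Kq
        push_cast
        linarith
      · rw [(show (5:ℕ)-1 = 4 by norm_num), G_four, (show (5:ℕ) = 4*1+1 by norm_num),
          G_b1 ha 1 (by omega) (by omega), CF_oe t (4*1+1) 1 (by omega)]
        unfold Kq
        push_cast
        linarith
      · rw [(show (6:ℕ)-1 = 4*1+1 by norm_num), (show (6:ℕ) = 4*1+2 by norm_num),
          G_b1 ha 1 (by omega) (by omega), G_b2 ha 1 (by omega),
          CF_oe t (4*1+1) 1 (by omega), CF_eo t (4*1+2) 0 (by omega)]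
        unfold Kq
        push_cast
        linarith
      · rw [(show (7:ℕ)-1 = 4*1+2 by norm_num), (show (7:ℕ) = 4*1+3 by norm_num),
          G_b2 ha 1 (by omega), G_b3 ha 1 (by omega), CF_eo t (4*1+2) 0 (by omega)]
        unfold Kq
        push_cast
        linarith
      · rw [(show (8:ℕ)-1 = 4*1+3 by norm_num), (show (8:ℕ) = 4*2 by norm_num),
          G_b3 ha 1 (by omega), G_b0 ha 2 (by omega) (by omega),
          CF_eo t (4*2) 1 (by omega)]
        unfold Kq
        push_cast
        linarith
    · obtain ⟨u, r, hur, hr⟩ : ∃ u r, n = 4 * u + r ∧ r < 4 :=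
        ⟨n / 4, n % 4, by omega, by omega⟩
      rcases (show r = 0 ∨ r = 1 ∨ r = 2 ∨ r = 3 by omega) with rfl|rfl|rfl|rfl
      · have hu : 3 ≤ u := by omega
        have hur' : n = 4 * u := by omega
        subst hur'
        have hT2 : 4*(u:ℤ) + 1 ≤ (t:ℤ) := by omega
        rw [(show 4*u - 1 = 4 * (u-1) + 3 by omega)]
        rw [G_b3 ha (u-1) (by omega), G_b0 ha u (by omega) (by omega),
          CF_eo t (4*u) 1 (by omega)]
        unfold Kq
        have e1 : ((u - 1 : ℕ) : ℤ) + 1 = (u:ℤ) := by omega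
        have e2 : ((u - 2 : ℕ) : ℤ) = (u:ℤ) - 2 := by omega
        rw [e2]
        push_cast
        rw [e1]
        linarith
      · have hu : 2 ≤ u := by omega
        have hur' : n = 4 * u + 1 := by omega
        subst hur'
        have hT2 : 4*(u:ℤ) + 2 ≤ (t:ℤ) := by omega
        rw [(show 4*u + 1 - 1 = 4 * u by omega)]
        rw [G_b0 ha u (by omega) (by omega), G_b1 ha u (by omega) (by omega),
          CF_eo t (4*u) 1 (by omega), CF_oe t (4*u+1) 1 (by omega)]
        unfold Kq
        have e1 : ((u - 1 : ℕ) : ℤ) = (u:ℤ) - 1 := by omega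
        have e2 : ((u - 2 : ℕ) : ℤ) = (u:ℤ) - 2 := by omega
        rw [e1, e2]
        push_cast
        linarith
      · have hu : 2 ≤ u := by omega
        have hur' : n = 4 * u + 2 := by omega
        subst hur'
        have hT2 : 4*(u:ℤ) + 3 ≤ (t:ℤ) := by omega
        rw [(show 4*u + 2 - 1 = 4 * u + 1 by omega)]
        rw [G_b1 ha u (by omega) (by omega), G_b2 ha u (by omega),
          CF_oe t (4*u+1) 1 (by omega), CF_eo t (4*u+2) 0 (by omega)]
        unfold Kq
        have e1 : ((u - 1 : ℕ) : ℤ) = (u:ℤ) - 1 := by omega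
        rw [e1]
        push_cast
        linarith
      · have hu : 2 ≤ u := by omega
        have hur' : n = 4 * u + 3 := by omega
        subst hur'
        have hT2 : 4*(u:ℤ) + 4 ≤ (t:ℤ) := by omega
        rw [(show 4*u + 3 - 1 = 4 * u + 2 by omega)]
        rw [G_b2 ha u (by omega), G_b3 ha u (by omega),
          CF_eo t (4*u+2) 0 (by omega)]
        unfold Kq
        push_cast
        linarith

end Gmain
section Gmain2

variable {t a c : ℕ} (ht : 6 ≤ t) (ha : a = (2 * t + 1) / 12) (hc : 3 * c + 4 * a = t + 1)

include ht ha hc in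
lemma G_rec {n : ℕ} (hn1 : 3 ≤ n) (hn2 : n + 1 ≤ t) : vv t n + G t (n - 3) ≤ G t n := by
  have hb1 : 12 * a ≤ 2 * t + 1 := by omega
  have hb2 : 2 * t + 1 ≤ 12 * a + 11 := by omega
  have ha1 : 1 ≤ a := by omega
  have hTl : (6 : ℤ) ≤ (t : ℤ) := by exact_mod_cast ht
  by_cases htop : 4 * a + 7 ≤ n
  · -- top region
    have hcf : 3 ≤ c := by omega
    obtain ⟨f, hf⟩ : ∃ f, t - 1 - n = 3 * f + (t - 1 - n) % 3 :=
      ⟨(t - 1 - n) / 3, by omega⟩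
    by_cases hint : 4 * a + 10 ≤ n
    · -- interior: n-3 also in the top region, same class
      have htop3 : 4 * a + 7 ≤ n - 3 := by omega
      rcases (show (t-1-n) % 3 = 0 ∨ (t-1-n) % 3 = 1 ∨ (t-1-n) % 3 = 2 by omega) with h|h|h
      · have he : n + 3 * f + 1 = t := by omega
        have he' : (n - 3) + 3 * (f + 1) + 1 = t := by omega
        rw [G_t0 ha hc n f he htop, G_t0 ha hc (n-3) (f+1) he' htop3]
        rw [CF_step t n (c - f + 1) (by omega) (by omega)]
        rw [(show c - f + 1 - 1 = c - (f+1) + 1 by omega)]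
        linarith
      · have he : n + 3 * f + 2 = t := by omega
        have hfb : f + 4 ≤ c := by omega
        have he' : (n - 3) + 3 * (f + 1) + 2 = t := by omega
        rw [G_t1 ha hc n f he htop, G_t1 ha hc (n-3) (f+1) he' htop3]
        rw [CF_step t n (c - f - 2) (by omega) (by omega)]
        rw [(show c - f - 2 - 1 = c - (f+1) - 2 by omega)]
        linarith
      · have he : n + 3 * f + 3 = t := by omega
        have hfb : f + 4 ≤ c := by omega
        have he' : (n - 3) + 3 * (f + 1) + 3 = t := by omega
        rw [G_t2 ha hc n f he htop, G_t2 ha hc (n-3) (f+1) he' htop3]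
        rw [CF_step t n (c - f - 1) (by omega) (by omega)]
        rw [(show c - f - 1 - 1 = c - (f+1) - 1 by omega)]
        linarith
    · -- boundary: n ∈ {4a+7, 4a+8, 4a+9}
      push_neg at hint
      have hTa : 4 * (a:ℤ) + 8 ≤ (t:ℤ) := by omega
      rcases (show n = 4*a+7 ∨ n = 4*a+8 ∨ n = 4*a+9 by omega) with rfl|rfl|rfl
      · have hcf3 : 3 ≤ c := by omega
        have he : (4*a+7) + 3 * (c - 3) + 1 = t := by omega
        rw [G_t0 ha hc (4*a+7) (c-3) he (by omega)]
        rw [(show c - (c-3) + 1 = 2 * 2 by omega), CF_oe t (4*a+7) 2 (by omega)]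
        rw [(show 4*a+7-3 = 4*(a+1) by omega), G_b0 ha (a+1) (by omega) (by omega)]
        rw [CF_eo t (4*(a+1)) 1 (by omega)]
        unfold vv Kq
        rw [if_pos (show (4*a+7) % 2 = 1 by omega)]
        have e1 : ((a - 1 : ℕ) : ℤ) = (a : ℤ) - 1 := by omega
        have e2 : ((a + 1 - 2 : ℕ) : ℤ) = (a : ℤ) - 1 := by omega
        rw [e1, e2]
        push_cast
        linarith
      · have hcf4 : 4 ≤ c := by omega
        have he : (4*a+8) + 3 * (c - 4) + 3 = t := by omega
        rw [G_t2 ha hc (4*a+8) (c-4) he (by omega)]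
        rw [(show c - (c-4) - 1 = 2 * 1 + 1 by omega), CF_eo t (4*a+8) 1 (by omega)]
        rw [(show 4*a+8-3 = 4*(a+1)+1 by omega), G_b1 ha (a+1) (by omega) (by omega)]
        rw [CF_oe t (4*(a+1)+1) 1 (by omega)]
        unfold vv Kq
        rw [if_neg (show ¬ (4*a+8) % 2 = 1 by omega)]
        have e2 : ((a + 1 - 1 : ℕ) : ℤ) = (a : ℤ) := by omega
        rw [e2]
        push_cast
        linarith
      · have hcf4 : 4 ≤ c := by omega
        have he : (4*a+9) + 3 * (c - 4) + 2 = t := by omega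
        rw [G_t1 ha hc (4*a+9) (c-4) he (by omega)]
        rw [(show c - (c-4) - 2 = 2 * 1 by omega), CF_oe t (4*a+9) 1 (by omega)]
        rw [(show 4*a+9-3 = 4*(a+1)+2 by omega), G_b2 ha (a+1) (by omega)]
        rw [CF_eo t (4*(a+1)+2) 0 (by omega)]
        unfold vv Kq
        rw [if_pos (show (4*a+9) % 2 = 1 by omega)]
        push_cast
        linarith
  · -- bottom region
    push_neg at htop
    rcases (show n ≤ 8 ∨ 9 ≤ n by omega) with hsmall | hbig
    · have hT8 : (8:ℤ) ≤ (t:ℤ) - 1 ∨ True := Or.inr trivial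
      interval_cases n
      · rw [(show (3:ℕ)-3 = 0 by norm_num), G_zero,
          (show (3:ℕ) = 4*0+3 by norm_num), G_b3 ha 0 (by omega)]
        unfold vv Kq
        rw [if_pos (by norm_num)]
        push_cast
        linarith
      · rw [(show (4:ℕ)-3 = 1 by norm_num), G_one, G_four]
        unfold vv
        rw [if_neg (by norm_num)]
        push_cast
        linarith
      · rw [(show (5:ℕ)-3 = 4*0+2 by norm_num), G_b2 ha 0 (by omega),
          CF_eo t (4*0+2) 0 (by omega),
          (show (5:ℕ) = 4*1+1 by norm_num), G_b1 ha 1 (by omega) (by omega),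
          CF_oe t (4*1+1) 1 (by omega)]
        unfold vv Kq
        rw [if_pos (by norm_num)]
        push_cast
        linarith
      · rw [(show (6:ℕ)-3 = 4*0+3 by norm_num), G_b3 ha 0 (by omega),
          (show (6:ℕ) = 4*1+2 by norm_num), G_b2 ha 1 (by omega),
          CF_eo t (4*1+2) 0 (by omega)]
        unfold vv Kq
        rw [if_neg (by norm_num)]
        push_cast
        linarith
      · rw [(show (7:ℕ)-3 = 4 by norm_num), G_four,
          (show (7:ℕ) = 4*1+3 by norm_num), G_b3 ha 1 (by omega)]
        unfold vv Kq
        rw [if_pos (by norm_num)]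
        push_cast
        linarith
      · rw [(show (8:ℕ)-3 = 4*1+1 by norm_num), G_b1 ha 1 (by omega) (by omega),
          CF_oe t (4*1+1) 1 (by omega),
          (show (8:ℕ) = 4*2 by norm_num), G_b0 ha 2 (by omega) (by omega),
          CF_eo t (4*2) 1 (by omega)]
        unfold vv Kq
        rw [if_neg (by norm_num)]
        push_cast
        linarith
    · obtain ⟨u, r, hur, hr⟩ : ∃ u r, n = 4 * u + r ∧ r < 4 :=
        ⟨n / 4, n % 4, by omega, by omega⟩
      rcases (show r = 0 ∨ r = 1 ∨ r = 2 ∨ r = 3 by omega) with rfl|rfl|rfl|rfl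
      · have hu : 3 ≤ u := by omega
        have hur' : n = 4 * u := by omega
        subst hur'
        rw [(show 4*u - 3 = 4 * (u-1) + 1 by omega)]
        rw [G_b1 ha (u-1) (by omega) (by omega), G_b0 ha u (by omega) (by omega),
          CF_oe t (4*(u-1)+1) 1 (by omega), CF_eo t (4*u) 1 (by omega)]
        unfold vv Kq
        rw [if_neg (by omega)]
        have e1 : ((u - 1 : ℕ) : ℤ) = (u:ℤ) - 1 := by omega
        have e2 : ((u - 2 : ℕ) : ℤ) = (u:ℤ) - 2 := by omega
        have e3 : ((u - 1 - 1 : ℕ) : ℤ) = (u:ℤ) - 2 := by omega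
        rw [e2, e3]
        push_cast
        linarith
      · have hu : 2 ≤ u := by omega
        have hur' : n = 4 * u + 1 := by omega
        subst hur'
        rw [(show 4*u + 1 - 3 = 4 * (u-1) + 2 by omega)]
        rw [G_b2 ha (u-1) (by omega), G_b1 ha u (by omega) (by omega),
          CF_eo t (4*(u-1)+2) 0 (by omega), CF_oe t (4*u+1) 1 (by omega)]
        unfold vv Kq
        rw [if_pos (by omega)]
        have e1 : ((u - 1 : ℕ) : ℤ) = (u:ℤ) - 1 := by omega
        rw [e1]
        push_cast
        linarith
      · have hu : 2 ≤ u := by omega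
        have hur' : n = 4 * u + 2 := by omega
        subst hur'
        rw [(show 4*u + 2 - 3 = 4 * (u-1) + 3 by omega)]
        rw [G_b3 ha (u-1) (by omega), G_b2 ha u (by omega),
          CF_eo t (4*u+2) 0 (by omega)]
        unfold vv Kq
        rw [if_neg (by omega)]
        have e1 : ((u - 1 : ℕ) : ℤ) + 1 = (u:ℤ) := by omega
        push_cast
        rw [e1]
        linarith
      · have hu : 2 ≤ u := by omega
        have hur' : n = 4 * u + 3 := by omega
        subst hur'
        have hua : u ≤ a := by omega
        have huac : (u:ℤ) ≤ (a:ℤ) := by exact_mod_cast hua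
        have hb1' : 12 * (a:ℤ) ≤ 2 * (t:ℤ) + 1 := by exact_mod_cast hb1
        rw [(show 4*u + 3 - 3 = 4 * u by omega)]
        rw [G_b0 ha u (by omega) (by omega), G_b3 ha u (by omega),
          CF_eo t (4*u) 1 (by omega)]
        unfold vv Kq
        rw [if_pos (by omega)]
        have e2 : ((u - 2 : ℕ) : ℤ) = (u:ℤ) - 2 := by omega
        rw [e2]
        push_cast
        nlinarith [hb1', huac]
end Gmain2
section Gmain3

variable {t a c : ℕ} (ht : 6 ≤ t) (ha : a = (2 * t + 1) / 12) (hc : 3 * c + 4 * a = t + 1)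

include ht ha hc in
lemma G_le {m n : ℕ} (hmn : m ≤ n) (hn : n + 1 ≤ t) : G t m ≤ G t n := by
  induction n with
  | zero =>
    have : m = 0 := by omega
    subst this
    exact le_refl _
  | succ k ih =>
    rcases Nat.lt_or_ge m (k + 1) with h | h
    · have h1 : G t m ≤ G t k := ih (by omega) (by omega)
      have h2 : G t k ≤ G t (k + 1) := by
        have := G_mono ht ha hc (n := k + 1) (by omega) (by omega)
        simpa using this
      linarith
    · have : m = k + 1 := by omega
      subst this
      exact le_refl _

include ht ha hc in
lemma G_nonneg {n : ℕ} (hn : n + 1 ≤ t) : 0 ≤ G t n := by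
  have := G_le ht ha hc (Nat.zero_le n) hn
  rwa [G_zero] at this

include ht ha hc in
lemma G_eval : G t (t - 1) = (c : ℤ) * ((t : ℤ) - 1) + Kq t a := by
  have hb1 : 12 * a ≤ 2 * t + 1 := by omega
  have hb2 : 2 * t + 1 ≤ 12 * a + 11 := by omega
  have ha1 : 1 ≤ a := by omega
  by_cases htop : 4 * a + 7 ≤ t - 1
  · have he : (t - 1) + 3 * 0 + 1 = t := by omega
    rw [G_t0 ha hc (t-1) 0 he htop]
    have h3c : 3 * (c:ℤ) + 4 * (a:ℤ) = (t:ℤ) + 1 := by exact_mod_cast hc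
    have e1 : ((a - 1 : ℕ) : ℤ) = (a : ℤ) - 1 := by omega
    rcases (show t % 2 = 0 ∨ t % 2 = 1 by omega) with hpar | hpar
    · obtain ⟨s, hs⟩ : ∃ s, c - 0 + 1 = 2 * s := ⟨(c+1)/2, by omega⟩
      rw [hs, CF_oe t (t-1) s (by omega)]
      unfold Kq
      rw [e1]
      have hsc : 2 * (s:ℤ) = (c:ℤ) + 1 := by
        have : 2 * s = c + 1 := by omega
        exact_mod_cast this
      push_cast
      have et : ((t - 1 : ℕ) : ℤ) = (t:ℤ) - 1 := by omega
      nlinarith [hsc, h3c]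
    · obtain ⟨s, hs⟩ : ∃ s, c - 0 + 1 = 2 * s + 1 := ⟨c/2, by omega⟩
      rw [hs, CF_eo t (t-1) s (by omega)]
      unfold Kq
      rw [e1]
      have hsc : 2 * (s:ℤ) = (c:ℤ) := by
        have : 2 * s = c := by omega
        exact_mod_cast this
      have et : ((t - 1 : ℕ) : ℤ) = (t:ℤ) - 1 := by omega
      rw [et]
      push_cast
      nlinarith [hsc, h3c]
  · have ht3 : t = 6 ∨ t = 9 ∨ t = 13 := by
      have h15 : t ≤ 15 := by omega
      interval_cases t <;> omega
    rcases ht3 with rfl | rfl | rfl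
    · have ha' : a = 1 := by omega
      have hc' : c = 1 := by omega
      subst ha'; subst hc'
      norm_num [G, CF, Kq]
    · have ha' : a = 1 := by omega
      have hc' : c = 2 := by omega
      subst ha'; subst hc'
      norm_num [G, CF, Kq]
    · have ha' : a = 2 := by omega
      have hc' : c = 2 := by omega
      subst ha'; subst hc'
      norm_num [G, CF, Kq]

include ht ha hc in
lemma sum_le_G (N : ℕ) (hN : N + 1 ≤ t) (C : Finset ℕ)
    (hrange : ∀ x ∈ C, 1 ≤ x ∧ x ≤ N)
    (hsep : ∀ x ∈ C, ∀ y ∈ C, x < y → x + 3 ≤ y) :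
    (∑ x ∈ C, vv t x) ≤ G t N := by
  induction N using Nat.strong_induction_on generalizing C with
  | _ N ih =>
    rcases Finset.eq_empty_or_nonempty C with rfl | hne
    · simpa using G_nonneg ht ha hc hN
    · set M := C.max' hne with hM
      have hMC : M ∈ C := C.max'_mem hne
      have hMb := hrange M hMC
      have hsum : ∑ x ∈ C, vv t x = vv t M + ∑ x ∈ C.erase M, vv t x := by
        rw [Finset.add_sum_erase C _ hMC]
      have herase : ∀ x ∈ C.erase M, 1 ≤ x ∧ x ≤ M - 3 := by
        intro x hx
        have hx1 : x ∈ C := Finset.mem_of_mem_erase hx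
        have hxM : x ≠ M := Finset.ne_of_mem_erase hx
        have hle : x ≤ M := C.le_max' x hx1
        have := hsep x hx1 M hMC (by omega)
        exact ⟨(hrange x hx1).1, by omega⟩
      rcases Nat.lt_or_ge M 3 with hM3 | hM3
      · have hCe : C.erase M = ∅ := by
          rw [Finset.eq_empty_iff_forall_notMem]
          intro x hx
          have := herase x hx
          omega
        rw [hsum, hCe, Finset.sum_empty, add_zero]
        have hvM : vv t M ≤ G t M := by
          rcases (show M = 1 ∨ M = 2 by omega) with h | h
          · rw [h, G_one]; unfold vv; norm_num
          · rw [h, (show (2:ℕ) = 4*0+2 by norm_num), G_b2 ha 0 (by omega),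
              CF_eo t (4*0+2) 0 (by omega)]
            unfold vv Kq
            rw [if_neg (by norm_num)]
            push_cast
            linarith
        calc vv t M ≤ G t M := hvM
          _ ≤ G t N := G_le ht ha hc hMb.2 hN
      · have hrec : ∑ x ∈ C.erase M, vv t x ≤ G t (M - 3) := by
          apply ih (M - 3) (by omega) (by omega) _ herase
          intro x hx y hy hxy
          exact hsep x (Finset.mem_of_mem_erase hx) y (Finset.mem_of_mem_erase hy) hxy
        have hGrec : vv t M + G t (M - 3) ≤ G t M :=
          G_rec ht ha hc hM3 (by omega)
        have hGle : G t M ≤ G t N := G_le ht ha hc hMb.2 hN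
        rw [hsum]
        linarith

end Gmain3
section Glue

variable {t a c : ℕ} (ht : 6 ≤ t) (ha : a = (2 * t + 1) / 12) (hc : 3 * c + 4 * a = t + 1)

/-- folding map: values ≤ t-1 stay, larger values are reflected -/
def cfold (t h : ℕ) : ℕ := if h ≤ t - 1 then h else 2 * t + 1 - h

include ht ha hc in
theorem size_le_of_inDS (lam : IntPartition) (hds : lam.InDS t) :
    (lam.size : ℤ) ≤ (c : ℤ) * ((t : ℤ) - 1) + Kq t a := by
  obtain ⟨hsc, hco1, hco2, hdist⟩ := hds
  set d := lam.durfee with hdd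
  -- facts about diagonal hooks
  have hfact : ∀ i, i < d → lam.hook i i % 2 = 1 ∧ 1 ≤ lam.hook i i ∧
      lam.hook i i ≤ 2 * t - 1 ∧ lam.hook i i ≠ t ∧ lam.hook i i ≠ t + 1 := by
    intro i hi
    have hodd := lam.diag_odd hsc hi
    have hp := lam.parts_gt_of_lt_durfee hi
    have hdiag := lam.hook_diag hsc hi
    have h0 : lam.hook 0 0 ≤ 2 * t - 1 :=
      lam.hook_zero_le t (by omega) hsc hco1 hco2 hdist (by omega)
    have hle : lam.hook i i ≤ 2 * t - 1 := by
      rcases Nat.eq_zero_or_pos i with rfl | hipos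
      · exact h0
      · have := lam.diag_gap hsc hdist hipos hi
        omega
    have hns := lam.no_sum t hsc hco1 hco2 hi hi
    refine ⟨hodd, by omega, hle, ?_, ?_⟩ <;> omega
  -- the folded set
  set F : ℕ → ℕ := fun i => cfold t (lam.hook i i) with hF
  have hFval : ∀ i, i < d → 1 ≤ F i ∧ F i ≤ t - 1 ∧ vv t (F i) = (lam.hook i i : ℤ) := by
    intro i hi
    obtain ⟨hodd, h1, h2, h3, h4⟩ := hfact i hi
    simp only [hF, cfold]
    split_ifs with hsmall
    · refine ⟨by omega, hsmall, ?_⟩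
      unfold vv
      rw [if_pos hodd]
    · refine ⟨by omega, by omega, ?_⟩
      unfold vv
      rw [if_neg (by omega)]
      omega
  have hgap : ∀ i j, i < j → j < d → lam.hook j j + 4 ≤ lam.hook i i :=
    fun i j hij hj => lam.diag_gap hsc hdist hij hj
  have hFsep : ∀ i j, i < d → j < d → i ≠ j → (F i + 3 ≤ F j ∨ F j + 3 ≤ F i) := by
    intro i j hi hj hij
    obtain ⟨hoi, h1i, h2i, h3i, h4i⟩ := hfact i hi
    obtain ⟨hoj, h1j, h2j, h3j, h4j⟩ := hfact j hj
    have hns := lam.no_sum t hsc hco1 hco2 hi hj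
    rcases lt_or_gt_of_ne hij with h | h
    · have := hgap i j h hj
      simp only [hF, cfold]
      split_ifs <;> omega
    · have := hgap j i h hi
      simp only [hF, cfold]
      split_ifs <;> omega
  have hFinj : ∀ i ∈ Finset.range d, ∀ j ∈ Finset.range d, F i = F j → i = j := by
    intro i hi j hj hFij
    simp only [Finset.mem_range] at hi hj
    by_contra hne
    rcases hFsep i j hi hj hne with h | h <;> omega
  set C : Finset ℕ := (Finset.range d).image F with hC
  have hsum : ∑ x ∈ C, vv t x = ∑ i ∈ Finset.range d, (lam.hook i i : ℤ) := by
    rw [hC, Finset.sum_image hFinj]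
    apply Finset.sum_congr rfl
    intro i hi
    simp only [Finset.mem_range] at hi
    exact (hFval i hi).2.2
  have hCb : ∀ x ∈ C, 1 ≤ x ∧ x ≤ t - 1 := by
    intro x hx
    simp only [hC, Finset.mem_image, Finset.mem_range] at hx
    obtain ⟨i, hi, rfl⟩ := hx
    exact ⟨(hFval i hi).1, (hFval i hi).2.1⟩
  have hCsep : ∀ x ∈ C, ∀ y ∈ C, x < y → x + 3 ≤ y := by
    intro x hx y hy hxy
    simp only [hC, Finset.mem_image, Finset.mem_range] at hx hy
    obtain ⟨i, hi, rfl⟩ := hx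
    obtain ⟨j, hj, rfl⟩ := hy
    have hne : i ≠ j := by
      intro hij
      rw [hij] at hxy
      omega
    rcases hFsep i j hi hj hne with h | h <;> omega
  have hbound := sum_le_G ht ha hc (t - 1) (by omega) C hCb hCsep
  rw [hsum] at hbound
  rw [G_eval ht ha hc] at hbound
  -- size equals the sum of diagonal hooks
  have hsize : (lam.size : ℤ) = ∑ i ∈ Finset.range d, (lam.hook i i : ℤ) := by
    rw [lam.size_eq_sum_diag hsc, Nat.cast_sum]
    apply Finset.sum_congr rfl
    intro i hi
    simp only [Finset.mem_range] at hi
    rw [lam.hook_diag hsc hi]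
  rw [hsize]
  exact hbound

end Glue
section Extremal

variable {t a c : ℕ} (ht : 6 ≤ t) (ha : a = (2 * t + 1) / 12) (hc : 3 * c + 4 * a = t + 1)

/-- top `a+c` parts of the extremal partition -/
def muX (t a : ℕ) (i : ℕ) : ℕ := if i < a then t - i else t + a - 1 - 2 * i

lemma sum_linear (BB A B : ℤ) : ∀ n : ℕ, 2 * (∑ i ∈ Finset.range n, (A - B * (i : ℤ)))
    = (n : ℤ) * (2 * A - B * ((n : ℤ) - 1)) := by
  intro n
  induction n with
  | zero => simp
  | succ k ihk =>
    rw [Finset.sum_range_succ]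
    push_cast
    ring_nf
    ring_nf at ihk
    linarith

include ht ha hc in
theorem exists_extremal :
    ∃ lam : IntPartition, lam.InDS t ∧ (lam.size : ℤ) = (c : ℤ) * ((t : ℤ) - 1) + Kq t a := by
  have hb1 : 12 * a ≤ 2 * t + 1 := by omega
  have hb2 : 2 * t + 1 ≤ 12 * a + 11 := by omega
  have ha1 : 1 ≤ a := by omega
  have hc1 : 1 ≤ c := by omega
  set d := a + c with hd
  have hdpos : 0 < d := by omega
  have hstrict : ∀ i j, i < j → j < d → muX t a j < muX t a i := by
    intro i j hij hj
    unfold muX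
    split_ifs <;> omega
  have hge : ∀ i, i < d → d ≤ muX t a i := by
    intro i hi
    unfold muX
    split_ifs <;> omega
  have hmax : ∀ i, i < d → muX t a i ≤ t := by
    intro i hi
    unfold muX
    split_ifs <;> omega
  have hsum : ∀ i j, i < d → j < d →
      (muX t a i - i) + (muX t a j - j) ≠ t + 1 ∧
      (muX t a i - i) + (muX t a j - j) ≠ t + 2 := by
    intro i j hi hj
    unfold muX
    split_ifs <;> omega
  obtain ⟨hds, hsize⟩ := IntPartition.bpartition_inDS hdpos hstrict hge t (by omega) hmax hsum
  refine ⟨_, hds, ?_⟩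
  rw [hsize]
  -- evaluate the sum
  have hsplit : ∑ i ∈ Finset.range d, (2 * ((muX t a i : ℕ) : ℤ) - 2 * (i : ℤ) - 1)
      = (∑ i ∈ Finset.range a, (2 * (t : ℤ) - 1 - 4 * (i : ℤ)))
      + (∑ j ∈ Finset.range c, (2 * (t : ℤ) - 4 * (a : ℤ) - 3 - 6 * (j : ℤ))) := by
    rw [hd, Finset.sum_range_add]
    congr 1
    · apply Finset.sum_congr rfl
      intro i hi
      simp only [Finset.mem_range] at hi
      unfold muX
      rw [if_pos hi]
      have : ((t - i : ℕ) : ℤ) = (t : ℤ) - i := by omega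
      rw [this]
      ring
    · apply Finset.sum_congr rfl
      intro j hj
      simp only [Finset.mem_range] at hj
      unfold muX
      rw [if_neg (by omega)]
      have : ((t + a - 1 - 2 * (a + j) : ℕ) : ℤ) = (t : ℤ) - (a : ℤ) - 1 - 2 * (j : ℤ) := by
        omega
      rw [this]
      push_cast
      ring
  rw [hsplit]
  have h1 := sum_linear 0 (2 * (t:ℤ) - 1) 4 a
  have h2 := sum_linear 0 (2 * (t:ℤ) - 4 * (a:ℤ) - 3) 6 c
  have h3c : 3 * (c : ℤ) + 4 * (a : ℤ) = (t : ℤ) + 1 := by exact_mod_cast hc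
  unfold Kq
  have hgoal :
      2 * ((∑ i ∈ Finset.range a, (2 * (t : ℤ) - 1 - 4 * (i : ℤ)))
        + (∑ j ∈ Finset.range c, (2 * (t : ℤ) - 4 * (a : ℤ) - 3 - 6 * (j : ℤ))))
      = 2 * ((c : ℤ) * ((t : ℤ) - 1) + (a : ℤ) * (2 * (t : ℤ) + 1 - 2 * (a : ℤ))) := by
    have e1 : ∀ i : ℕ, (2 * (t : ℤ) - 1 - 4 * (i : ℤ)) = (2 * (t:ℤ) - 1) - 4 * (i:ℤ) :=
      fun i => by ring
    rw [mul_add, h1, h2]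
    linear_combination (-2 * (c:ℤ)) * h3c
  linarith

end Extremal

end DSAux


/-- Case (1) of the largest-size theorem: for `t ≥ 6` even with
`t/2 - 1 - 2⌊(2t+1)/12⌋ ≡ 0 (mod 3)`, or `t ≥ 6` odd with
`(t-1)/2 - 2⌊(2t+1)/12⌋ ≡ 2 (mod 3)`, the largest size of a partition in
`DS(t)` is `(1/3)(t-1)(t+1-4⌊(2t+1)/12⌋) + ⌊(2t+1)/12⌋(2t+1-2⌊(2t+1)/12⌋)`. -/
theorem largest_size_inDS_case_one (t : ℕ) (ht : 6 ≤ t)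
    (hcase :
      (Even t ∧ ((t : ℤ) / 2 - 1 - 2 * ((2 * (t : ℤ) + 1) / 12)) % 3 = 0) ∨
      (Odd t ∧ (((t : ℤ) - 1) / 2 - 2 * ((2 * (t : ℤ) + 1) / 12)) % 3 = 2)) :
    IsGreatest {n : ℤ | ∃ lam : IntPartition, lam.InDS t ∧ (lam.size : ℤ) = n}
      (((t : ℤ) - 1) * ((t : ℤ) + 1 - 4 * ((2 * (t : ℤ) + 1) / 12)) / 3 +
        ((2 * (t : ℤ) + 1) / 12) *
          (2 * (t : ℤ) + 1 - 2 * ((2 * (t : ℤ) + 1) / 12))) := by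
  set a : ℕ := (2 * t + 1) / 12 with ha
  have hA : (2 * (t : ℤ) + 1) / 12 = (a : ℤ) := by omega
  have hcex : ∃ c : ℕ, 3 * c + 4 * a = t + 1 := by
    rcases hcase with ⟨hev, hm⟩ | ⟨hod, hm⟩
    · have h2 : t % 2 = 0 := Nat.even_iff.mp hev
      exact ⟨(t + 1 - 4 * a) / 3, by omega⟩
    · have h2 : t % 2 = 1 := Nat.odd_iff.mp hod
      exact ⟨(t + 1 - 4 * a) / 3, by omega⟩
  obtain ⟨c, hc⟩ := hcex
  have htgt : ((t : ℤ) - 1) * ((t : ℤ) + 1 - 4 * ((2 * (t : ℤ) + 1) / 12)) / 3 +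
        ((2 * (t : ℤ) + 1) / 12) * (2 * (t : ℤ) + 1 - 2 * ((2 * (t : ℤ) + 1) / 12))
      = (c : ℤ) * ((t : ℤ) - 1) + DSAux.Kq t a := by
    rw [hA]
    have h3c : ((t : ℤ) + 1 - 4 * (a : ℤ)) = 3 * (c : ℤ) := by omega
    rw [h3c]
    rw [show ((t : ℤ) - 1) * (3 * (c : ℤ)) = 3 * ((c : ℤ) * ((t : ℤ) - 1)) by ring]
    rw [Int.mul_ediv_cancel_left _ (by norm_num : (3 : ℤ) ≠ 0)]
    unfold DSAux.Kq
    ring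
  rw [htgt]
  constructor
  · obtain ⟨lam, hds, hsz⟩ := DSAux.exists_extremal ht ha hc
    exact ⟨lam, hds, hsz⟩
  · rintro n ⟨lam, hds, rfl⟩
    exact DSAux.size_le_of_inDS ht ha hc lam hds
end
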